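/- arXiv:2406.03286 — 6 statements merged into one kernel-verified Lean document; each statement's English description precedes it below -/
import Mathlib

section
/- For every solution x(·) of the nonlinear multiagent system and all times s ≥ t ≥ 0, the maximal norm is nonincreasing: max_{1≤i≤N} |x_i(s)| ≤ max_{1≤i≤N} |x_i(t)|. -/
open MeasureTheory Finset

noncomputable section

/-- Diameter of a configuration of `N` agents in `ℝ^d`. -/
def mDiam {N d : ℕ} (x : Fin N → EuclideanSpace ℝ (Fin d)) : ℝ :=
  ⨆ i : Fin N, ⨆ j : Fin N, ‖x i - x j‖

/-- Variance of a configuration of `N` agents in `ℝ^d`. -/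
def mVar {N d : ℕ} (x : Fin N → EuclideanSpace ℝ (Fin d)) : ℝ :=
  (N : ℝ)⁻¹ * ∑ i : Fin N, ‖x i - (N : ℝ)⁻¹ • ∑ k : Fin N, x k‖ ^ 2

/-- Admissible interaction signals: measurable, valued in `[0,1]` on `[0,∞)`. -/
def ValidSignal (N : ℕ) (a : Fin N → Fin N → ℝ → ℝ) : Prop :=
  ∀ i j, Measurable (a i j) ∧ ∀ t : ℝ, 0 ≤ t → a i j t ∈ Set.Icc (0 : ℝ) 1

/-- Admissible kernels: locally Lipschitz and positive on `[0,∞)`. -/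
def ValidKernel (φ : ℝ → ℝ) : Prop :=
  LocallyLipschitz φ ∧ ∀ r : ℝ, 0 ≤ r → 0 < φ r

/-- Solutions of the nonlinear multiagent system
`ẋ_i(t) = (1/N) ∑_j a_{ij}(t) φ(|x_i(t) − x_j(t)|)(x_j(t) − x_i(t))` for a.e. `t ≥ 0`,
as locally Lipschitz curves on `[0,∞)`. -/
def IsMASol {N d : ℕ} (a : Fin N → Fin N → ℝ → ℝ) (φ : ℝ → ℝ)
    (x : Fin N → ℝ → EuclideanSpace ℝ (Fin d)) : Prop :=
  (∀ i, ∀ r : ℝ, 0 < r → ∃ K : NNReal, LipschitzOnWith K (x i) (Set.Icc 0 r)) ∧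
  (∀ᵐ t ∂(volume : Measure ℝ), 0 ≤ t → ∀ i, HasDerivAt (x i)
    ((N : ℝ)⁻¹ • ∑ j : Fin N, (a i j t * φ ‖x i t - x j t‖) • (x j t - x i t)) t)

/-- The scrambling coefficient of an `N × N` matrix. -/
def scrambling {N : ℕ} (A : Fin N → Fin N → ℝ) : ℝ :=
  ⨅ i : Fin N, ⨅ j : Fin N, (N : ℝ)⁻¹ * ∑ k : Fin N, min (A i k) (A j k)

/-- Scrambling-persistent signals: the scrambling coefficient of the averaged matrix
over every window `[t, t+τ]` is at least `μ`. -/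
def ScramblingPersistent (N : ℕ) (τ μ : ℝ) (a : Fin N → Fin N → ℝ → ℝ) : Prop :=
  ValidSignal N a ∧
  ∀ t : ℝ, 0 ≤ t → μ ≤ scrambling (fun i j => τ⁻¹ * ∫ s in t..t + τ, a i j s)

/-- A matrix is balanced if its in- and out-degrees coincide. -/
def IsBalanced {N : ℕ} (A : Fin N → Fin N → ℝ) : Prop :=
  ∀ i, ∑ j : Fin N, A i j = ∑ j : Fin N, A j i

/-- The algebraic connectivity of a (balanced) matrix: the largest `λ` such that
`(1/(2N²)) ∑_{ij} a_{ij} |x_i − x_j|² ≥ λ V(x)` for all configurations `x`. -/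
def lambda2 (d : ℕ) {N : ℕ} (A : Fin N → Fin N → ℝ) : ℝ :=
  sSup {lam : ℝ | ∀ x : Fin N → EuclideanSpace ℝ (Fin d),
    lam * mVar x ≤ (2 * (N : ℝ) ^ 2)⁻¹ * ∑ i : Fin N, ∑ j : Fin N, A i j * ‖x i - x j‖ ^ 2}

/-- Connectivity-persistent balanced signals. -/
def ConnectivityPersistent (N d : ℕ) (τ μ : ℝ) (a : Fin N → Fin N → ℝ → ℝ) : Prop :=
  ValidSignal N a ∧
  (∀ᵐ t ∂(volume : Measure ℝ), 0 ≤ t → IsBalanced (fun i j => a i j t)) ∧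
  ∀ t : ℝ, 0 ≤ t → μ ≤ lambda2 d (fun i j => τ⁻¹ * ∫ s in t..t + τ, a i j s)

/-- Solutions of the linear multiagent system
`ẋ_i(t) = (1/N) ∑_j a_{ij}(t) (x_j(t) − x_i(t))` for a.e. `t ≥ 0`. -/
def IsLinSol {N d : ℕ} (a : Fin N → Fin N → ℝ → ℝ)
    (x : Fin N → ℝ → EuclideanSpace ℝ (Fin d)) : Prop :=
  (∀ i, ∀ r : ℝ, 0 < r → ∃ K : NNReal, LipschitzOnWith K (x i) (Set.Icc 0 r)) ∧
  (∀ᵐ t ∂(volume : Measure ℝ), 0 ≤ t → ∀ i, HasDerivAt (x i)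
    ((N : ℝ)⁻¹ • ∑ j : Fin N, a i j t • (x j t - x i t)) t)

open Set in
lemma forward_bound {g : ℝ → ℝ} {a b K : ℝ} (hab : a ≤ b) (hK : 0 ≤ K)
    (hlip : ∀ x ∈ Set.Icc a b, ∀ y ∈ Set.Icc a b, |g x - g y| ≤ K * |x - y|)
    {A : Set ℝ} (hA : volume (Set.Icc a b \ A) = 0)
    (hgood : ∀ s ∈ A ∩ Set.Ico a b, ∀ ε : ℝ, 0 < ε → ∃ δ > 0,
      ∀ y ∈ Set.Icc s (s + δ), g y ≤ g s + ε * (y - s)) :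
    g b ≤ g a := by
  have key : ∀ ε : ℝ, 0 < ε → g b ≤ g a + ε * (b - a) + ε := by
    intro ε hε
    have hKpos : (0:ℝ) < K + 1 := by linarith
    obtain ⟨U, hUsub, hUopen, hUvol⟩ :=
      Set.exists_isOpen_lt_of_lt (Set.Icc a b \ A) (ENNReal.ofReal (ε / (K + 1)))
        (by rw [hA]; exact ENNReal.ofReal_pos.2 (div_pos hε hKpos))
    have hUfin : volume U ≠ ⊤ := (hUvol.trans ENNReal.ofReal_lt_top).ne
    have hfin : ∀ s : Set ℝ, s ⊆ U → volume s ≠ ⊤ := fun s hs =>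
      ((measure_mono hs).trans_lt (hUvol.trans ENNReal.ofReal_lt_top)).ne
    set w : ℝ → ℝ := fun x => (volume (U ∩ Set.Ioc a x)).toReal with hw
    have wfin : ∀ x, volume (U ∩ Set.Ioc a x) ≠ ⊤ := fun x => hfin _ inter_subset_left
    have wmono : ∀ {u v : ℝ}, u ≤ v → w u ≤ w v := by
      intro u v huv
      exact (ENNReal.toReal_le_toReal (wfin u) (wfin v)).mpr
        (measure_mono (Set.inter_subset_inter le_rfl (Set.Ioc_subset_Ioc le_rfl huv)))
    have wadd : ∀ {u v : ℝ}, a ≤ u → u ≤ v →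
        w v = w u + (volume (U ∩ Set.Ioc u v)).toReal := by
      intro u v hau huv
      have hsplit : Set.Ioc a v = Set.Ioc a u ∪ Set.Ioc u v :=
        (Set.Ioc_union_Ioc_eq_Ioc hau huv).symm
      have hdisj : Disjoint (U ∩ Set.Ioc a u) (U ∩ Set.Ioc u v) :=
        (Set.Ioc_disjoint_Ioc_of_le le_rfl).mono Set.inter_subset_right Set.inter_subset_right
      have hmeas : MeasurableSet (U ∩ Set.Ioc u v) :=
        hUopen.measurableSet.inter measurableSet_Ioc
      have hvol : volume (U ∩ Set.Ioc a v)
          = volume (U ∩ Set.Ioc a u) + volume (U ∩ Set.Ioc u v) := by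
        rw [hsplit, Set.inter_union_distrib_left]
        exact measure_union hdisj hmeas
      simp only [hw]
      rw [hvol, ENNReal.toReal_add (wfin u) (hfin _ inter_subset_left)]
    have wincr : ∀ {u v : ℝ}, u ≤ v → (volume (U ∩ Set.Ioc u v)).toReal ≤ v - u := by
      intro u v huv
      calc (volume (U ∩ Set.Ioc u v)).toReal ≤ (volume (Set.Ioc u v)).toReal := by
            refine (ENNReal.toReal_le_toReal (hfin _ inter_subset_left) ?_).mpr
              (measure_mono Set.inter_subset_right)
            rw [Real.volume_Ioc]; exact ENNReal.ofReal_ne_top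
        _ = v - u := by rw [Real.volume_Ioc, ENNReal.toReal_ofReal (by linarith)]
    have wa : w a = 0 := by simp [hw]
    have wnonneg : ∀ x, 0 ≤ w x := fun x => ENNReal.toReal_nonneg
    have wcont : Continuous w := by
      have wlip : LipschitzWith 1 w := by
        apply LipschitzWith.of_dist_le_mul
        intro u v
        rw [NNReal.coe_one, one_mul]
        wlog huv : v ≤ u generalizing u v
        · rw [dist_comm, dist_comm u v]; exact this v u (le_of_not_ge huv)
        rw [Real.dist_eq, Real.dist_eq, abs_of_nonneg (by linarith [wmono huv]),
          abs_of_nonneg (by linarith)]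
        rcases le_total a v with hav | hva
        · have h1 := wadd hav huv
          have h2 := wincr huv
          linarith
        · have h3 : w v = 0 := by
            simp only [hw]; rw [Set.Ioc_eq_empty (not_lt.2 hva)]; simp
          rcases le_total a u with hau | hua
          · have h1 := wadd (le_refl a) hau
            have h2 := wincr hau
            rw [wa] at h1
            rw [h3]; linarith
          · have h4 : w u = 0 := by
              simp only [hw]; rw [Set.Ioc_eq_empty (not_lt.2 hua)]; simp
            rw [h3, h4]; linarith
      exact wlip.continuous
    have hwb : (K + 1) * w b ≤ ε := by
      have h1 : w b ≤ (volume U).toReal :=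
        (ENNReal.toReal_le_toReal (wfin b) hUfin).mpr (measure_mono Set.inter_subset_left)
      have h2 : (volume U).toReal ≤ ε / (K + 1) := by
        have h3 := (ENNReal.toReal_le_toReal hUfin ENNReal.ofReal_ne_top).mpr hUvol.le
        rwa [ENNReal.toReal_ofReal (le_of_lt (div_pos hε hKpos))] at h3
      calc (K + 1) * w b ≤ (K + 1) * (ε / (K + 1)) :=
            mul_le_mul_of_nonneg_left (h1.trans h2) (by linarith)
        _ = ε := by field_simp
    clear_value w
    clear hw wincr wfin hfin hUfin
    have gcont : ContinuousOn g (Set.Icc a b) := by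
      have hg : LipschitzOnWith ⟨K, hK⟩ g (Set.Icc a b) := by
        refine lipschitzOnWith_iff_dist_le_mul.2 ?_
        intro u hu v hv
        rw [Real.dist_eq, Real.dist_eq]
        exact_mod_cast hlip u hu v hv
      exact hg.continuousOn
    set S : Set ℝ := Set.Icc a b ∩ {x | g x - (g a + ε * (x - a) + (K + 1) * w x) ≤ 0} with hS
    have hSclosed : IsClosed S := by
      apply ContinuousOn.preimage_isClosed_of_isClosed
        (f := fun x => g x - (g a + ε * (x - a) + (K + 1) * w x)) (t := Set.Iic 0)
        (gcont.sub (Continuous.continuousOn ?_)) isClosed_Icc isClosed_Iic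
      exact (continuous_const.add (continuous_const.mul
        (continuous_id.sub continuous_const))).add (continuous_const.mul wcont)
    have haS : a ∈ S := ⟨⟨le_refl a, hab⟩, by simp [wa]⟩
    have hSbdd : BddAbove S := ⟨b, fun z hz => hz.1.2⟩
    set c := sSup S with hc
    have hcS : c ∈ S := hSclosed.csSup_mem ⟨a, haS⟩ hSbdd
    have hac : a ≤ c := le_csSup hSbdd haS
    have hcb : c ≤ b := hcS.1.2
    have hcbound : g c ≤ g a + ε * (c - a) + (K + 1) * w c := by
      have h := hcS.2; simp only [Set.mem_setOf_eq] at h; linarith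
    have hcb' : c = b := by
      by_contra hne
      have hclt : c < b := lt_of_le_of_ne hcb hne
      have step : ∃ y, c < y ∧ y ∈ S := by
        by_cases hcA : c ∈ A
        · obtain ⟨δ, hδ, hδgood⟩ := hgood c ⟨hcA, hcS.1.1, hclt⟩ ε hε
          set y := min (c + δ) b with hy
          have hcy : c < y := lt_min (by linarith) hclt
          have hyb : y ≤ b := min_le_right _ _
          have hy1 : y ∈ Set.Icc c (c + δ) := ⟨hcy.le, min_le_left _ _⟩
          have hgy := hδgood y hy1
          have hwc : w c ≤ w y := wmono hcy.le
          refine ⟨y, hcy, ⟨hac.trans hcy.le, hyb⟩, ?_⟩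
          simp only [Set.mem_setOf_eq]
          nlinarith
        · have hcU : c ∈ U := hUsub ⟨hcS.1, hcA⟩
          obtain ⟨δ, hδ, hball⟩ := Metric.isOpen_iff.1 hUopen c hcU
          set y := min (c + δ / 2) b with hy
          have hcy : c < y := lt_min (by linarith) hclt
          have hyb : y ≤ b := min_le_right _ _
          have hsub : Set.Ioc c y ⊆ U := by
            intro z hz
            apply hball
            rw [Metric.mem_ball, Real.dist_eq, abs_of_pos (by linarith [hz.1])]
            have h5 : z ≤ c + δ / 2 := hz.2.trans (min_le_left _ _)
            linarith [hz.1]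
          have hwy : w y = w c + (y - c) := by
            rw [wadd hac hcy.le, Set.inter_eq_self_of_subset_right hsub, Real.volume_Ioc,
              ENNReal.toReal_ofReal (by linarith)]
          have hgy : g y - g c ≤ K * (y - c) := by
            have h6 := hlip y ⟨hac.trans hcy.le, hyb⟩ c ⟨hac, hcb⟩
            rw [abs_of_pos (show (0:ℝ) < y - c by linarith)] at h6
            exact (le_abs_self _).trans h6
          refine ⟨y, hcy, ⟨hac.trans hcy.le, hyb⟩, ?_⟩
          simp only [Set.mem_setOf_eq]
          rw [hwy]
          nlinarith
      obtain ⟨y, hy1, hy2⟩ := step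
      exact absurd (le_csSup hSbdd hy2) (not_le.2 hy1)
    have hb2 := (hcb' ▸ hcS).2
    simp only [Set.mem_setOf_eq] at hb2
    linarith
  by_contra h
  push_neg at h
  have hba : 0 ≤ b - a := by linarith
  set ε := (g b - g a) / (2 * (b - a + 1)) with hε
  have hεpos : 0 < ε := div_pos (by linarith) (by linarith)
  have hkey := key ε hεpos
  have h2 : ε * (b - a + 1) = (g b - g a) / 2 := by
    rw [hε]; field_simp
  nlinarith

/-- Along any solution of the nonlinear multiagent system, the maximal norm
`max_i |x_i|` is nonincreasing on `[0,∞)`. -/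
theorem max_norm_nonincreasing {N d : ℕ} (hN : 1 ≤ N)
    (a : Fin N → Fin N → ℝ → ℝ) (φ : ℝ → ℝ)
    (ha : ValidSignal N a) (hφ : ValidKernel φ)
    (x : Fin N → ℝ → EuclideanSpace ℝ (Fin d)) (hx : IsMASol a φ x)
    (t s : ℝ) (ht : 0 ≤ t) (hts : t ≤ s) :
    (⨆ i : Fin N, ‖x i s‖) ≤ ⨆ i : Fin N, ‖x i t‖ := by
  haveI : NeZero N := ⟨by omega⟩
  haveI : Nonempty (Fin N) := ⟨⟨0, by omega⟩⟩
  rcases eq_or_lt_of_le hts with rfl | hlt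
  · exact le_refl _
  have hs0 : 0 < s := lt_of_le_of_lt ht hlt
  choose K hKlip using fun i => hx.1 i s hs0
  set f : Fin N → ℝ → ℝ := fun i y => ‖x i y‖ ^ 2 with hf
  set g : ℝ → ℝ := fun y => ⨆ i, f i y with hg
  have hgbdd : ∀ y : ℝ, BddAbove (Set.range fun i => f i y) := fun y =>
    Set.Finite.bddAbove (Set.finite_range _)
  -- uniform bound on [t,s]
  set R : Fin N → ℝ := fun i => ‖x i 0‖ + (K i : ℝ) * s with hR
  have hR0 : ∀ i, 0 ≤ R i := fun i => by
    simp only [hR]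
    have h1 := (K i).coe_nonneg
    have h2 := hs0.le
    positivity
  have hRb : ∀ i, ∀ y ∈ Set.Icc t s, ‖x i y‖ ≤ R i := by
    intro i y hy
    have hy0 : y ∈ Set.Icc 0 s := ⟨ht.trans hy.1, hy.2⟩
    have h0m : (0:ℝ) ∈ Set.Icc 0 s := ⟨le_refl _, hs0.le⟩
    have hd := (hKlip i).dist_le_mul y hy0 0 h0m
    rw [Real.dist_eq, sub_zero, abs_of_nonneg hy0.1, dist_eq_norm] at hd
    have h1 : ‖x i y‖ - ‖x i 0‖ ≤ ‖x i y - x i 0‖ := norm_sub_norm_le _ _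
    have h2 : (K i : ℝ) * y ≤ (K i : ℝ) * s :=
      mul_le_mul_of_nonneg_left hy0.2 (K i).coe_nonneg
    simp only [hR]; linarith
  -- Lipschitz bound for f i on [t,s]
  set C : Fin N → ℝ := fun i => 2 * R i * (K i : ℝ) with hC
  have hC0 : ∀ i, 0 ≤ C i := fun i => by
    have := hR0 i; have := (K i).coe_nonneg; positivity
  have hflip : ∀ i, ∀ u ∈ Set.Icc t s, ∀ v ∈ Set.Icc t s,
      |f i u - f i v| ≤ C i * |u - v| := by
    intro i u hu v hv
    have hu0 : u ∈ Set.Icc 0 s := ⟨ht.trans hu.1, hu.2⟩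
    have hv0 : v ∈ Set.Icc 0 s := ⟨ht.trans hv.1, hv.2⟩
    have hd := (hKlip i).dist_le_mul u hu0 v hv0
    rw [dist_eq_norm, Real.dist_eq] at hd
    have h1 : |‖x i u‖ - ‖x i v‖| ≤ ‖x i u - x i v‖ := abs_norm_sub_norm_le _ _
    have h2 := hRb i u hu
    have h3 := hRb i v hv
    have hfe : f i u - f i v = (‖x i u‖ - ‖x i v‖) * (‖x i u‖ + ‖x i v‖) := by
      simp only [hf]; ring
    rw [hfe, abs_mul, abs_of_nonneg (by positivity : (0:ℝ) ≤ ‖x i u‖ + ‖x i v‖)]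
    calc |‖x i u‖ - ‖x i v‖| * (‖x i u‖ + ‖x i v‖)
        ≤ ((K i : ℝ) * |u - v|) * (2 * R i) := by
          apply mul_le_mul (h1.trans hd) (by linarith) (by positivity)
          positivity
      _ = C i * |u - v| := by simp only [hC]; ring
  set Kc : ℝ := ∑ i, C i with hKc
  have hKc0 : 0 ≤ Kc := Finset.sum_nonneg fun i _ => hC0 i
  have hCle : ∀ i, C i ≤ Kc := fun i =>
    Finset.single_le_sum (fun j _ => hC0 j) (Finset.mem_univ i)
  have hglip : ∀ u ∈ Set.Icc t s, ∀ v ∈ Set.Icc t s, |g u - g v| ≤ Kc * |u - v| := by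
    intro u hu v hv
    have key : ∀ p ∈ Set.Icc t s, ∀ q ∈ Set.Icc t s, g p - g q ≤ Kc * |p - q| := by
      intro p hp q hq
      rw [sub_le_iff_le_add]
      refine ciSup_le fun i => ?_
      have h1 := hflip i p hp q hq
      have h2 : f i q ≤ g q := le_ciSup (hgbdd q) i
      have h3 : C i * |p - q| ≤ Kc * |p - q| :=
        mul_le_mul_of_nonneg_right (hCle i) (abs_nonneg _)
      have h4 : f i p - f i q ≤ |f i p - f i q| := le_abs_self _
      linarith
    have h5 := key u hu v hv
    have h6 := key v hv u hu
    rw [abs_sub_comm] at h6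
    rw [abs_le]
    constructor <;> linarith
  -- a.e. set of good times
  set A : Set ℝ := {u : ℝ | 0 ≤ u → ∀ i, HasDerivAt (x i)
    ((N : ℝ)⁻¹ • ∑ j : Fin N, (a i j u * φ ‖x i u - x j u‖) • (x j u - x i u)) u} with hAdef
  have hA : volume (Set.Icc t s \ A) = 0 := by
    have h := hx.2
    rw [MeasureTheory.ae_iff] at h
    exact measure_mono_null (fun z hz => hz.2) h
  -- the key local estimate at good points
  have hgood : ∀ s₀ ∈ A ∩ Set.Ico t s, ∀ ε : ℝ, 0 < ε → ∃ δ > 0,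
      ∀ y ∈ Set.Icc s₀ (s₀ + δ), g y ≤ g s₀ + ε * (y - s₀) := by
    intro s₀ hs₀ ε hε
    have h0 : (0:ℝ) ≤ s₀ := ht.trans hs₀.2.1
    set v : Fin N → EuclideanSpace ℝ (Fin d) := fun i =>
      (N : ℝ)⁻¹ • ∑ j : Fin N, (a i j s₀ * φ ‖x i s₀ - x j s₀‖) • (x j s₀ - x i s₀) with hv
    have hD : ∀ i, HasDerivAt (x i) (v i) s₀ := hs₀.1 h0
    have hDf : ∀ i, HasDerivAt (f i) (2 * (inner ℝ (x i s₀) (v i) : ℝ)) s₀ := by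
      intro i
      have h1 := HasDerivAt.inner (𝕜 := ℝ) (hD i) (hD i)
      have h2 : (inner ℝ (x i s₀) (v i) : ℝ) + (inner ℝ (v i) (x i s₀) : ℝ)
          = 2 * (inner ℝ (x i s₀) (v i) : ℝ) := by
        rw [real_inner_comm (v i) (x i s₀)]; ring
      rw [h2] at h1
      have h3 : f i = fun y => inner ℝ (x i y) (x i y) := by
        funext y
        simp only [hf]
        rw [real_inner_self_eq_norm_sq]
      rw [h3]
      exact h1
    -- sign of derivative at maximizers
    have hsign : ∀ i, (∀ j, ‖x j s₀‖ ≤ ‖x i s₀‖) → (inner ℝ (x i s₀) (v i) : ℝ) ≤ 0 := by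
      intro i hi
      simp only [hv]
      rw [real_inner_smul_right, inner_sum]
      apply mul_nonpos_of_nonneg_of_nonpos
      · positivity
      apply Finset.sum_nonpos
      intro j _
      rw [real_inner_smul_right]
      apply mul_nonpos_of_nonneg_of_nonpos
      · have ha1 := ((ha i j).2 s₀ h0).1
        have hφ1 := (hφ.2 _ (norm_nonneg (x i s₀ - x j s₀))).le
        positivity
      · rw [inner_sub_right, real_inner_self_eq_norm_sq]
        have h1 : (inner ℝ (x i s₀) (x j s₀) : ℝ) ≤ ‖x i s₀‖ * ‖x j s₀‖ :=
          real_inner_le_norm _ _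
        have h2 := hi j
        nlinarith [norm_nonneg (x i s₀), norm_nonneg (x j s₀)]
    obtain ⟨i₀, -, hi₀⟩ := Finset.exists_max_image Finset.univ (fun j => f j s₀)
      Finset.univ_nonempty
    have hi₀' : ∀ j, f j s₀ ≤ f i₀ s₀ := fun j => hi₀ j (Finset.mem_univ j)
    have hnorm_le : ∀ j, ‖x j s₀‖ ≤ ‖x i₀ s₀‖ := by
      intro j
      have := hi₀' j
      simp only [hf] at this
      nlinarith [norm_nonneg (x j s₀), norm_nonneg (x i₀ s₀)]
    have hev : ∀ j, ∀ᶠ y in nhdsWithin s₀ (Set.Ioi s₀),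
        f j y ≤ f i₀ s₀ + ε * (y - s₀) := by
      intro j
      rcases lt_or_eq_of_le (hi₀' j) with hjlt | hjeq
      · -- non-maximizer: continuity
        have hcont : ContinuousAt (f j) s₀ := (hDf j).continuousAt
        have h1 : ∀ᶠ y in nhds s₀, f j y < f i₀ s₀ :=
          hcont.eventually_lt_const hjlt
        have h2 := nhdsWithin_le_nhds (s := Set.Ioi s₀) h1
        filter_upwards [h2, eventually_mem_nhdsWithin] with y hy hy'
        have h3 : (0:ℝ) ≤ ε * (y - s₀) := mul_nonneg hε.le (by
          have : s₀ < y := hy'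
          linarith)
        linarith
      · -- maximizer: derivative sign
        have hjmax : ∀ k, ‖x k s₀‖ ≤ ‖x j s₀‖ := by
          intro k
          have h1 := hi₀' k
          have h2 : f j s₀ = f i₀ s₀ := hjeq
          have h3 : f k s₀ ≤ f j s₀ := by rw [h2]; exact h1
          simp only [hf] at h3
          nlinarith [norm_nonneg (x k s₀), norm_nonneg (x j s₀)]
        have hDj : 2 * (inner ℝ (x j s₀) (v j) : ℝ) ≤ 0 := by
          have := hsign j hjmax; linarith
        have hslope := hasDerivAt_iff_tendsto_slope.1 (hDf j)
        have h1 : ∀ᶠ y in nhdsWithin s₀ {s₀}ᶜ, slope (f j) s₀ y < ε :=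
          hslope.eventually_lt_const (by linarith)
        have h2 : ∀ᶠ y in nhdsWithin s₀ (Set.Ioi s₀), slope (f j) s₀ y < ε := by
          apply Filter.Eventually.filter_mono (nhdsWithin_mono s₀ ?_) h1
          intro y hy
          exact Set.mem_compl_singleton_iff.2 (LT.lt.ne' hy)
        filter_upwards [h2, eventually_mem_nhdsWithin] with y hy hy'
        have hy0 : (0:ℝ) < y - s₀ := sub_pos.2 hy'
        rw [slope_def_field] at hy
        have h3 : f j y - f j s₀ < ε * (y - s₀) := by
          have := (div_lt_iff₀ hy0).1 hy
          linarith
        have h4 : f j s₀ = f i₀ s₀ := hjeq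
        linarith
    have hevall : ∀ᶠ y in nhdsWithin s₀ (Set.Ioi s₀),
        ∀ j, f j y ≤ f i₀ s₀ + ε * (y - s₀) := Filter.eventually_all.2 hev
    rw [Filter.Eventually, mem_nhdsGT_iff_exists_Ioc_subset] at hevall
    obtain ⟨u, hu, hsub⟩ := hevall
    refine ⟨u - s₀, sub_pos.2 hu, fun y hy => ?_⟩
    rcases eq_or_lt_of_le hy.1 with rfl | hy1
    · simp
    have hyIoc : y ∈ Set.Ioc s₀ u := ⟨hy1, by linarith [hy.2]⟩
    have hall := hsub hyIoc
    refine ciSup_le fun j => ?_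
    have h1 : f i₀ s₀ ≤ g s₀ := le_ciSup (hgbdd s₀) i₀
    have := hall j
    linarith
  have hmain : g s ≤ g t := forward_bound hts hKc0 hglip hA hgood
  -- conclude
  set Mt : ℝ := ⨆ j, ‖x j t‖ with hMt
  have hMtle : ∀ j, ‖x j t‖ ≤ Mt := fun j =>
    le_ciSup (f := fun j => ‖x j t‖) (Set.Finite.bddAbove (Set.finite_range _)) j
  have hMt0 : 0 ≤ Mt := (norm_nonneg _).trans (hMtle (Classical.arbitrary _))
  have h2 : g t ≤ Mt ^ 2 := by
    refine ciSup_le fun j => ?_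
    simp only [hf]
    exact pow_le_pow_left₀ (norm_nonneg _) (hMtle j) 2
  refine ciSup_le fun i => ?_
  have h1 : f i s ≤ g s := le_ciSup (hgbdd s) i
  have h3 : ‖x i s‖ ^ 2 ≤ Mt ^ 2 := by
    have : f i s = ‖x i s‖ ^ 2 := rfl
    linarith
  nlinarith [norm_nonneg (x i s)]
end
end

section
/- For every solution x(·) of the nonlinear multiagent system and all times s ≥ t ≥ 0, the convex hulls of the agent positions are nested: conv{x_1(s),…,x_N(s)} ⊆ conv{x_1(t),…,x_N(t)}. -/
open MeasureTheory Finset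

noncomputable section

lemma lipschitz_le_of_ae_deriv_nonpos {f : ℝ → ℝ} {K : NNReal} (hf : LipschitzWith K f)
    {a b : ℝ} (hab : a ≤ b)
    (hd : ∀ᵐ t ∂(volume : Measure ℝ), t ∈ Set.Ioc a b →
      DifferentiableAt ℝ f t ∧ deriv f t ≤ 0) :
    f b ≤ f a := by
  set g : ℝ → ℝ := fun t => (K : ℝ) * t - f t with hgdef
  have hmono : Monotone g := by
    intro u v huv
    have h1 : dist (f u) (f v) ≤ (K : ℝ) * dist u v := hf.dist_le_mul u v
    rw [Real.dist_eq, Real.dist_eq] at h1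
    have habs : |u - v| = v - u := by rw [abs_sub_comm]; exact abs_of_nonneg (by linarith)
    rw [habs] at h1
    have h2 : f v - f u ≤ (K : ℝ) * (v - u) :=
      le_trans (le_trans (le_abs_self _) (abs_sub_comm (f v) (f u) ▸ le_refl _)) h1
    simp only [hgdef]
    linarith
  have hcontg : Continuous g := (continuous_const.mul continuous_id).sub hf.continuous
  set S : StieltjesFunction ℝ := ⟨g, hmono, fun x => hcontg.continuousAt.continuousWithinAt⟩
    with hSdef
  have hae := S.ae_hasDerivAt
  have hlt := Measure.rnDeriv_lt_top S.measure volume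
  have key : ∀ᵐ t ∂(volume : Measure ℝ), t ∈ Set.Ioc a b →
      ENNReal.ofReal (K : ℝ) ≤ S.measure.rnDeriv volume t := by
    filter_upwards [hae, hlt, hd] with t h1 h2 h3 ht
    obtain ⟨hdiff, hderiv⟩ := h3 ht
    have hg' : HasDerivAt g ((K : ℝ) * 1 - deriv f t) t :=
      ((hasDerivAt_id t).const_mul (K : ℝ)).sub hdiff.hasDerivAt
    have huniq : (S.measure.rnDeriv volume t).toReal = (K : ℝ) * 1 - deriv f t :=
      h1.unique hg'
    have hKle : (K : ℝ) ≤ (S.measure.rnDeriv volume t).toReal := by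
      rw [huniq]; linarith
    calc ENNReal.ofReal (K : ℝ) ≤ ENNReal.ofReal (S.measure.rnDeriv volume t).toReal :=
          ENNReal.ofReal_le_ofReal hKle
      _ = S.measure.rnDeriv volume t := ENNReal.ofReal_toReal h2.ne
  have h4 : ENNReal.ofReal ((K : ℝ) * (b - a)) ≤ ENNReal.ofReal (g b - g a) := by
    calc ENNReal.ofReal ((K : ℝ) * (b - a))
        = ENNReal.ofReal (K : ℝ) * volume (Set.Ioc a b) := by
          rw [Real.volume_Ioc, ← ENNReal.ofReal_mul (by positivity)]
      _ = ∫⁻ _ in Set.Ioc a b, ENNReal.ofReal (K : ℝ) ∂volume :=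
          (setLIntegral_const _ _).symm
      _ ≤ ∫⁻ t in Set.Ioc a b, S.measure.rnDeriv volume t ∂volume :=
          setLIntegral_mono_ae' measurableSet_Ioc key
      _ = (volume.withDensity (S.measure.rnDeriv volume)) (Set.Ioc a b) :=
          (withDensity_apply _ measurableSet_Ioc).symm
      _ ≤ S.measure (Set.Ioc a b) := (Measure.withDensity_rnDeriv_le _ _) _
      _ = ENNReal.ofReal (g b - g a) := S.measure_Ioc a b
  have h5 : (K : ℝ) * (b - a) ≤ g b - g a := by
    have h0 : 0 ≤ g b - g a := by have := hmono hab; linarith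
    exact (ENNReal.ofReal_le_ofReal_iff h0).1 h4
  simp only [hgdef] at h5
  linarith

lemma sup'_dist_le_aux {N : ℕ} (hne : (Finset.univ : Finset (Fin N)).Nonempty)
    (u v : Fin N → ℝ) {C : ℝ} (h : ∀ j, dist (u j) (v j) ≤ C) :
    dist (Finset.univ.sup' hne u) (Finset.univ.sup' hne v) ≤ C := by
  rw [Real.dist_eq, abs_sub_le_iff]
  constructor
  · rw [sub_le_iff_le_add]
    apply Finset.sup'_le
    intro j _
    have h1 := h j
    rw [Real.dist_eq] at h1
    have h2 : u j ≤ v j + C := by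
      have := le_abs_self (u j - v j); linarith
    have h3 : v j ≤ Finset.univ.sup' hne v := Finset.le_sup' v (Finset.mem_univ j)
    linarith
  · rw [sub_le_iff_le_add]
    apply Finset.sup'_le
    intro j _
    have h1 := h j
    rw [Real.dist_eq] at h1
    have h2 : v j ≤ u j + C := by
      have := neg_abs_le (u j - v j); linarith
    have h3 : u j ≤ Finset.univ.sup' hne u := Finset.le_sup' u (Finset.mem_univ j)
    linarith

/-- Along any solution of the nonlinear multiagent system, the convex hulls
of the agents' positions are nested in time. -/
theorem convexHull_nested {N d : ℕ} (hN : 1 ≤ N)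
    (a : Fin N → Fin N → ℝ → ℝ) (φ : ℝ → ℝ)
    (ha : ValidSignal N a) (hφ : ValidKernel φ)
    (x : Fin N → ℝ → EuclideanSpace ℝ (Fin d)) (hx : IsMASol a φ x)
    (t s : ℝ) (ht : 0 ≤ t) (hts : t ≤ s) :
    convexHull ℝ (Set.range fun i => x i s) ⊆ convexHull ℝ (Set.range fun i => x i t) := by
  set C := convexHull ℝ (Set.range fun i => x i t) with hC
  have hCconv : Convex ℝ C := convex_convexHull _ _
  have hCclosed : IsClosed C := ((Set.finite_range _).isCompact_convexHull ℝ).isClosed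
  apply convexHull_min _ hCconv
  rintro _ ⟨i, rfl⟩
  by_contra hmem
  obtain ⟨f, u, hfu, huf⟩ := geometric_hahn_banach_closed_point hCconv hCclosed hmem
  haveI : Nonempty (Fin N) := ⟨⟨0, hN⟩⟩
  have hne : (Finset.univ : Finset (Fin N)).Nonempty := Finset.univ_nonempty
  set F : Fin N → ℝ → ℝ := fun j r => f (x j r) with hF
  set g : ℝ → ℝ := fun r => Finset.univ.sup' hne (fun j => F j r) with hg
  have hs1 : (0 : ℝ) < s + 1 := by linarith
  choose K hK using fun i => hx.1 i (s + 1) hs1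
  set K' : NNReal := ‖f‖₊ * Finset.univ.sup (fun j => K j) with hK'
  have hFlip : ∀ j, LipschitzOnWith (‖f‖₊ * K j) (F j) (Set.Icc 0 (s + 1)) :=
    fun j => f.lipschitz.comp_lipschitzOnWith (hK j)
  have hglip : LipschitzOnWith K' g (Set.Icc 0 (s + 1)) := by
    apply LipschitzOnWith.of_dist_le_mul
    intro p hp q hq
    apply sup'_dist_le_aux hne _ _ (fun j => ?_)
    calc dist (F j p) (F j q) ≤ (‖f‖₊ * K j : NNReal) * dist p q :=
          (hFlip j).dist_le_mul p hp q hq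
      _ ≤ (K' : ℝ) * dist p q := by
          apply mul_le_mul_of_nonneg_right _ dist_nonneg
          exact_mod_cast mul_le_mul_right (Finset.le_sup (Finset.mem_univ j)) ‖f‖₊
  obtain ⟨G, hG, hEqOn⟩ := hglip.extend_real
  have htmem : t ∈ Set.Icc (0 : ℝ) (s + 1) := ⟨ht, by linarith⟩
  have hsmem : s ∈ Set.Icc (0 : ℝ) (s + 1) := ⟨le_trans ht hts, by linarith⟩
  have hae : ∀ᵐ τ ∂(volume : Measure ℝ), τ ∈ Set.Ioc t s →
      DifferentiableAt ℝ G τ ∧ deriv G τ ≤ 0 := by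
    filter_upwards [hx.2, hG.ae_differentiableAt] with τ hODE hdiff hτ
    have hτpos : 0 < τ := lt_of_le_of_lt ht hτ.1
    have hODE' := hODE hτpos.le
    obtain ⟨j, -, hj⟩ := Finset.exists_mem_eq_sup' hne (fun j => F j τ)
    set v := (N : ℝ)⁻¹ • ∑ k : Fin N, (a j k τ * φ ‖x j τ - x k τ‖) • (x k τ - x j τ) with hv
    have hxj : HasDerivAt (x j) v τ := hODE' j
    have hFj : HasDerivAt (F j) (f v) τ := f.hasFDerivAt.comp_hasDerivAt τ hxj
    have hnbhd : Set.Icc (0 : ℝ) (s + 1) ∈ nhds τ :=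
      Icc_mem_nhds hτpos (by linarith [hτ.2])
    have hlocmin : IsLocalMin (fun σ => G σ - F j σ) τ := by
      filter_upwards [hnbhd] with σ hσ
      have h1 : g σ = G σ := hEqOn hσ
      have h2 : g τ = G τ := hEqOn ⟨hτpos.le, by linarith [hτ.2]⟩
      have h3 : F j σ ≤ g σ := Finset.le_sup' (fun k => F k σ) (Finset.mem_univ j)
      have h4 : g τ = F j τ := hj
      show G τ - F j τ ≤ G σ - F j σ
      linarith
    have hderivG : deriv G τ = f v := by
      have h0 : deriv (fun σ => G σ - F j σ) τ = 0 := hlocmin.deriv_eq_zero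
      rw [deriv_fun_sub hdiff hFj.differentiableAt, hFj.deriv] at h0
      linarith
    refine ⟨hdiff, ?_⟩
    rw [hderivG]
    have hfv : f v = (N : ℝ)⁻¹ * ∑ k : Fin N,
        (a j k τ * φ ‖x j τ - x k τ‖) * (f (x k τ) - f (x j τ)) := by
      rw [hv, _root_.map_smul, _root_.map_sum, smul_eq_mul]
      congr 1
      refine Finset.sum_congr rfl fun k _ => ?_
      rw [_root_.map_smul, _root_.map_sub, smul_eq_mul]
    rw [hfv]
    apply mul_nonpos_of_nonneg_of_nonpos
    · positivity
    apply Finset.sum_nonpos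
    intro k _
    apply mul_nonpos_of_nonneg_of_nonpos
    · exact mul_nonneg ((ha j k).2 τ hτpos.le).1 (hφ.2 _ (norm_nonneg _)).le
    · have h5 : F k τ ≤ g τ := Finset.le_sup' (fun k => F k τ) (Finset.mem_univ k)
      have h6 : g τ = F j τ := hj
      simp only [hF] at h5 h6
      linarith
  have hGle : G s ≤ G t := lipschitz_le_of_ae_deriv_nonpos hG hts hae
  have hgle : g s ≤ g t := by
    rw [hEqOn hsmem, hEqOn htmem]; exact hGle
  have hgtlt : g t < u := by
    rw [hg]
    rw [Finset.sup'_lt_iff]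
    intro j _
    exact hfu (x j t) (subset_convexHull ℝ _ ⟨j, rfl⟩)
  have hgsgt : u < g s := lt_of_lt_of_le huf (Finset.le_sup' (fun k => F k s) (Finset.mem_univ i))
  linarith
end
end

section
/- For every solution x(·) of the nonlinear multiagent system and all times s ≥ t ≥ 0, the diameter is nonincreasing: D(x(s)) ≤ D(x(t)). -/
open MeasureTheory Finset

noncomputable section

section AuxLemmas
open Set Filter

lemma antitone_of_ae_slope (g : ℝ → ℝ) (a b : ℝ) (hab : a ≤ b) (K : NNReal)
    (hg : LipschitzOnWith K g (Set.Icc a b))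
    (H : ∀ᵐ u ∂(volume : Measure ℝ), u ∈ Set.Ioo a b →
      ∀ ε : ℝ, 0 < ε → ∀ᶠ w in nhdsWithin u (Set.Ioi u), g w ≤ g u + ε * (w - u)) :
    g b ≤ g a := by
  have hdist := (lipschitzOnWith_iff_dist_le_mul).1 hg
  refine le_of_forall_pos_le_add fun ε εpos => ?_
  set ε' : ℝ := ε / (b - a + K + 1) with hε'
  have hden : (0:ℝ) < b - a + K + 1 := by have h1 := sub_nonneg.2 hab; have h2 := K.coe_nonneg; linarith
  have ε'pos : 0 < ε' := div_pos εpos hden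
  -- the bad set
  set P : ℝ → Prop := fun u => ∀ ε : ℝ, 0 < ε → ∀ᶠ w in nhdsWithin u (Set.Ioi u),
      g w ≤ g u + ε * (w - u) with hP
  set Z : Set ℝ := {u ∈ Set.Ioo a b | ¬ P u} ∪ {a} with hZ
  have hZnull : volume Z = 0 := by
    apply measure_union_null _ (Real.volume_singleton)
    have : {u ∈ Set.Ioo a b | ¬ P u} ⊆ {u | ¬ (u ∈ Set.Ioo a b → P u)} := by
      intro u hu; simp only [Set.mem_setOf_eq] at *; tauto
    exact measure_mono_null this H
  obtain ⟨U, hZU, hUopen, hUlt⟩ := Set.exists_isOpen_lt_of_lt Z (ENNReal.ofReal ε')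
    (by rw [hZnull]; exact ENNReal.ofReal_pos.2 ε'pos)
  have hUfin : volume U ≠ ⊤ := (hUlt.trans ENNReal.ofReal_lt_top).ne
  set h : ℝ → ℝ := fun u => (volume (U ∩ Set.Ioc a u)).toReal with hh
  have hfin : ∀ u, volume (U ∩ Set.Ioc a u) ≠ ⊤ :=
    fun u => ((measure_mono Set.inter_subset_left).trans_lt (lt_top_iff_ne_top.2 hUfin)).ne
  have hmono : Monotone h := by
    intro u v huv
    exact ENNReal.toReal_mono (hfin v) (measure_mono (Set.inter_subset_inter_right _ (Set.Ioc_subset_Ioc_right huv)))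
  have hsplit : ∀ u v, a ≤ u → u ≤ v → h v ≤ h u + (v - u) := by
    intro u v hau huv
    have : U ∩ Set.Ioc a v ⊆ (U ∩ Set.Ioc a u) ∪ (U ∩ Set.Ioc u v) := by
      rw [← Set.inter_union_distrib_left, Set.Ioc_union_Ioc_eq_Ioc hau huv]
    have h1 : volume (U ∩ Set.Ioc a v) ≤ volume (U ∩ Set.Ioc a u) + volume (U ∩ Set.Ioc u v) :=
      (measure_mono this).trans (measure_union_le _ _)
    have h2 : volume (U ∩ Set.Ioc u v) ≤ ENNReal.ofReal (v - u) := by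
      calc volume (U ∩ Set.Ioc u v) ≤ volume (Set.Ioc u v) := measure_mono Set.inter_subset_right
        _ = ENNReal.ofReal (v - u) := Real.volume_Ioc
    calc h v ≤ ((volume (U ∩ Set.Ioc a u)) + ENNReal.ofReal (v - u)).toReal :=
          ENNReal.toReal_mono (ENNReal.add_ne_top.2 ⟨hfin u, ENNReal.ofReal_ne_top⟩) (h1.trans (add_le_add le_rfl h2))
      _ = h u + (v - u) := by
          rw [ENNReal.toReal_add (hfin u) ENNReal.ofReal_ne_top,
            ENNReal.toReal_ofReal (by linarith)]
  have hgrow : ∀ t u, a ≤ t → t ≤ u → Set.Ioc t u ⊆ U → h t + (u - t) ≤ h u := by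
    intro t u hat htu hsub
    have hdisj : Disjoint (U ∩ Set.Ioc a t) (Set.Ioc t u) := by
      apply Set.disjoint_of_subset_left Set.inter_subset_right
      exact Set.Ioc_disjoint_Ioc_of_le le_rfl
    have hun : (U ∩ Set.Ioc a t) ∪ Set.Ioc t u ⊆ U ∩ Set.Ioc a u := by
      apply Set.union_subset
      · exact Set.inter_subset_inter_right _ (Set.Ioc_subset_Ioc_right htu)
      · exact Set.subset_inter hsub (Set.Ioc_subset_Ioc_left hat)
    have hum := measure_union hdisj measurableSet_Ioc (μ := volume)
    have hle : volume (U ∩ Set.Ioc a t) + ENNReal.ofReal (u - t) ≤ volume (U ∩ Set.Ioc a u) := by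
      rw [← Real.volume_Ioc, ← hum]; exact measure_mono hun
    have := ENNReal.toReal_mono (hfin u) hle
    rwa [ENNReal.toReal_add (hfin t) ENNReal.ofReal_ne_top,
      ENNReal.toReal_ofReal (by linarith)] at this
  have hcont : ContinuousOn h (Set.Icc a b) := by
    apply LipschitzOnWith.continuousOn (K := 1)
    rw [lipschitzOnWith_iff_dist_le_mul]
    intro u hu v hv
    rcases le_total u v with huv | huv
    · have h1 := hsplit u v hu.1 huv
      have h2 := hmono huv
      rw [Real.dist_eq, Real.dist_eq, abs_of_nonpos (by linarith), abs_of_nonpos (by linarith)]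
      push_cast; linarith
    · have h1 := hsplit v u hv.1 huv
      have h2 := hmono huv
      rw [Real.dist_eq, Real.dist_eq, abs_of_nonneg (by linarith), abs_of_nonneg (by linarith)]
      push_cast; linarith
  set F : ℝ → ℝ := fun u => ε' * (u - a) + (K : ℝ) * h u with hF
  set sset : Set ℝ := {u | g u - g a ≤ F u} ∩ Set.Icc a b with hsset
  have s_closed : IsClosed sset := by
    have hc : ContinuousOn (fun u => (g u - g a, F u)) (Set.Icc a b) := by
      apply ContinuousOn.prodMk
      · exact (hg.continuousOn.sub continuousOn_const)
      · exact (continuousOn_const.mul (continuousOn_id.sub continuousOn_const)).add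
          (continuousOn_const.mul hcont)
    simp only [hsset, Set.inter_comm]
    exact hc.preimage_isClosed_of_isClosed isClosed_Icc OrderClosedTopology.isClosed_le'
  have main : Set.Icc a b ⊆ {u | g u - g a ≤ F u} := by
    refine (IsClosed.Icc_subset_of_forall_exists_gt (s := {u | g u - g a ≤ F u}) s_closed ?_ ?_)
    · simp only [Set.mem_setOf_eq, sub_self, hF]
      have : h a = 0 := by simp [hh]
      rw [this]; ring_nf; rfl
    · rintro t ⟨htset, hta, htb⟩ y hy
      by_cases htU : t ∈ U
      · obtain ⟨δ, δpos, hball⟩ := Metric.isOpen_iff.1 hUopen t htU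
        rw [Real.ball_eq_Ioo] at hball
        set u := min (t + δ/2) (min y b) with hu
        have htu : t < u := by
          apply lt_min (by linarith) (lt_min hy (htb))
        refine ⟨u, ?_, htu, min_le_of_right_le (min_le_left _ _)⟩
        have hub : u ≤ b := min_le_of_right_le (min_le_right _ _)
        have hsub : Set.Ioc t u ⊆ U := by
          intro w hw
          apply hball
          have h1 : u ≤ t + δ/2 := min_le_left _ _
          exact ⟨by linarith [hw.1], by linarith [hw.2]⟩
        have hgu : g u - g t ≤ (K:ℝ) * (u - t) := by
          have h2 := hdist u ⟨by linarith, hub⟩ t ⟨hta, le_of_lt htb⟩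
          rw [Real.dist_eq, Real.dist_eq] at h2
          rw [abs_of_nonneg (by linarith : (0:ℝ) ≤ u - t)] at h2
          exact (le_abs_self _).trans h2
        have hgrow' := hgrow t u hta (le_of_lt htu) hsub
        show g u - g a ≤ F u
        simp only [Set.mem_setOf_eq, hF] at htset ⊢
        have : (K:ℝ) * (h t + (u - t)) ≤ (K:ℝ) * h u :=
          mul_le_mul_of_nonneg_left hgrow' K.coe_nonneg
        nlinarith [ε'pos, K.coe_nonneg]
      · have htZ : t ∉ Z := fun hmem => htU (hZU hmem)
        have htne : t ≠ a := by rintro rfl; exact htZ (Or.inr rfl)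
        have htIoo : t ∈ Set.Ioo a b := ⟨lt_of_le_of_ne hta (Ne.symm htne), htb⟩
        have hPt : P t := by
          by_contra hc
          exact htZ (Or.inl ⟨htIoo, hc⟩)
        have hev := hPt ε' ε'pos
        have hmem : Set.Ioo t (min y b) ∈ nhdsWithin t (Set.Ioi t) :=
          Ioo_mem_nhdsGT (lt_min hy htb)
        obtain ⟨u, hu1, hu2⟩ := (hev.and (eventually_of_mem hmem (fun w hw => hw))).exists
        refine ⟨u, ?_, hu2.1, le_of_lt (lt_of_lt_of_le hu2.2 (min_le_left _ _))⟩
        have hub : u ≤ b := le_of_lt (lt_of_lt_of_le hu2.2 (min_le_right _ _))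
        show g u - g a ≤ F u
        simp only [Set.mem_setOf_eq, hF] at htset ⊢
        have hmono' : h t ≤ h u := hmono (le_of_lt hu2.1)
        have : (K:ℝ) * h t ≤ (K:ℝ) * h u := mul_le_mul_of_nonneg_left hmono' K.coe_nonneg
        nlinarith [hu2.1, ε'pos]
  have hb := main ⟨hab, le_rfl⟩
  simp only [Set.mem_setOf_eq, hF] at hb
  have hhb : h b ≤ ε' := by
    have h1 : volume (U ∩ Set.Ioc a b) ≤ ENNReal.ofReal ε' :=
      le_of_lt (lt_of_le_of_lt (measure_mono Set.inter_subset_left) hUlt)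
    exact ENNReal.toReal_le_of_le_ofReal (le_of_lt ε'pos) h1
  have hKh : (K:ℝ) * h b ≤ (K:ℝ) * ε' := mul_le_mul_of_nonneg_left hhb K.coe_nonneg
  have hfinal : ε' * (b - a) + (K:ℝ) * ε' ≤ ε := by
    have h0 : ε' * (b - a + (K:ℝ) + 1) = ε := by
      rw [hε']; field_simp
    nlinarith [ε'pos]
  linarith


lemma lipschitzOnWith_finset_sup' {ι : Type*} (s : Finset ι) (hs : s.Nonempty)
    (f : ι → ℝ → ℝ) (K : NNReal) (S : Set ℝ)
    (h : ∀ p ∈ s, LipschitzOnWith K (f p) S) :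
    LipschitzOnWith K (fun u => s.sup' hs fun p => f p u) S := by
  rw [lipschitzOnWith_iff_dist_le_mul]
  intro u hu v hv
  rw [Real.dist_eq, abs_sub_le_iff]
  constructor
  · obtain ⟨p, hp, hpe⟩ := Finset.exists_mem_eq_sup' hs (fun p => f p u)
    have h1 : f p u - f p v ≤ (K:ℝ) * dist u v := by
      have := (lipschitzOnWith_iff_dist_le_mul.1 (h p hp)) u hu v hv
      rw [Real.dist_eq] at this
      linarith [le_abs_self (f p u - f p v), this]
    have h2 : f p v ≤ s.sup' hs fun q => f q v := Finset.le_sup' (fun q => f q v) hp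
    rw [hpe]; linarith
  · obtain ⟨p, hp, hpe⟩ := Finset.exists_mem_eq_sup' hs (fun p => f p v)
    have h1 : f p v - f p u ≤ (K:ℝ) * dist u v := by
      have := (lipschitzOnWith_iff_dist_le_mul.1 (h p hp)) v hv u hu
      rw [Real.dist_eq] at this
      have hd : dist u v = dist v u := dist_comm _ _
      rw [← hd] at this
      linarith [le_abs_self (f p v - f p u), this]
    have h2 : f p u ≤ s.sup' hs fun q => f q u := Finset.le_sup' (fun q => f q u) hp
    rw [hpe]; linarith

lemma slope_of_max {ι : Type*} [Finite ι] (s : Finset ι) (hs : s.Nonempty)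
    (f : ι → ℝ → ℝ) (u : ℝ) (d : ι → ℝ)
    (hd : ∀ p ∈ s, HasDerivAt (f p) (d p) u)
    (hneg : ∀ p ∈ s, f p u = s.sup' hs (fun q => f q u) → d p ≤ 0)
    (ε : ℝ) (hε : 0 < ε) :
    ∀ᶠ w in nhdsWithin u (Set.Ioi u),
      (s.sup' hs fun q => f q w) ≤ (s.sup' hs fun q => f q u) + ε * (w - u) := by
  set M : ℝ := s.sup' hs fun q => f q u with hM
  have key : ∀ p ∈ s, ∀ᶠ w in nhdsWithin u (Set.Ioi u), f p w ≤ M + ε * (w - u) := by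
    intro p hp
    by_cases hact : f p u = M
    · have hdp : d p ≤ 0 := hneg p hp hact
      have hslope := (hasDerivAt_iff_tendsto_slope.1 (hd p hp))
      have h1 : ∀ᶠ w in nhdsWithin u {u}ᶜ, slope (f p) u w < ε :=
        hslope.eventually (tendsto_id.eventually_lt_const (by linarith))
      have h2 : nhdsWithin u (Set.Ioi u) ≤ nhdsWithin u {u}ᶜ := by
        apply nhdsWithin_mono
        intro w hw
        exact (ne_of_gt hw)
      filter_upwards [h2 h1, self_mem_nhdsWithin] with w hw hw2
      rw [slope_def_field] at hw
      have hwu : 0 < w - u := sub_pos.2 hw2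
      rw [div_lt_iff₀ hwu] at hw
      linarith [hact]
    · have hlt : f p u < M := lt_of_le_of_ne (Finset.le_sup' (fun q => f q u) hp) hact
      have hcont : ContinuousAt (f p) u := (hd p hp).continuousAt
      have h1 : ∀ᶠ w in nhds u, f p w < M := hcont.eventually_lt continuousAt_const hlt
      filter_upwards [nhdsWithin_le_nhds h1, self_mem_nhdsWithin] with w hw hw2
      have : 0 ≤ ε * (w - u) := mul_nonneg hε.le (sub_nonneg.2 (le_of_lt (Set.mem_Ioi.1 hw2)))
      linarith
  have := (Filter.eventually_all_finset s).2 key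
  filter_upwards [this] with w hw
  exact Finset.sup'_le _ _ fun p hp => hw p hp

open MeasureTheory Finset

lemma LipschitzOnWith.weaken' {α β : Type*} [PseudoEMetricSpace α] [PseudoEMetricSpace β]
    {K K' : NNReal} {f : α → β} {S : Set α} (h : LipschitzOnWith K f S) (hK : K ≤ K') :
    LipschitzOnWith K' f S :=
  fun _ hx _ hy => (h hx hy).trans (mul_le_mul_left (ENNReal.coe_le_coe.2 hK) _)

end AuxLemmas

open RealInnerProductSpace

/-- Along any solution of the nonlinear multiagent system, the diameter
is nonincreasing on `[0,∞)`. -/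
theorem diam_nonincreasing {N d : ℕ} (hN : 1 ≤ N)
    (a : Fin N → Fin N → ℝ → ℝ) (φ : ℝ → ℝ)
    (ha : ValidSignal N a) (hφ : ValidKernel φ)
    (x : Fin N → ℝ → EuclideanSpace ℝ (Fin d)) (hx : IsMASol a φ x)
    (t s : ℝ) (ht : 0 ≤ t) (hts : t ≤ s) :
    mDiam (fun i => x i s) ≤ mDiam (fun i => x i t) := by
  classical
  have hNE : Nonempty (Fin N) := ⟨⟨0, hN⟩⟩
  have sqle : ∀ p q : ℝ, 0 ≤ p → 0 ≤ q → p^2 ≤ q^2 → p ≤ q := by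
    intro p q hp hq h
    nlinarith [sq_nonneg (p - q), sq_nonneg (p + q)]
  rcases eq_or_lt_of_le hts with rfl | hts'
  · exact le_refl _
  have hs0 : 0 < s := lt_of_le_of_lt ht hts'
  -- uniform Lipschitz constant for the agents on [0, s]
  choose Kf hKf using fun i => hx.1 i s hs0
  set Km : NNReal := Finset.univ.sup Kf with hKmdef
  have hKm : ∀ i, LipschitzOnWith Km (x i) (Set.Icc 0 s) :=
    fun i => LipschitzOnWith.weaken' (hKf i) (Finset.le_sup (Finset.mem_univ i))
  have hKmd := fun i => (lipschitzOnWith_iff_dist_le_mul).1 (hKm i)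
  -- uniform bound on the agents on [0, s]
  choose C hC using fun i =>
    (isCompact_Icc (a := (0:ℝ)) (b := s)).exists_bound_of_continuousOn (hKm i).continuousOn
  set B : ℝ := max (Finset.univ.sup' Finset.univ_nonempty C) 1 with hBdef
  have hB1 : (0:ℝ) < B := lt_of_lt_of_le one_pos (le_max_right _ _)
  have hBball : ∀ i, ∀ u ∈ Set.Icc 0 s, ‖x i u‖ ≤ B := by
    intro i u hu
    exact le_trans (hC i u hu) (le_trans (Finset.le_sup' C (Finset.mem_univ i)) (le_max_left _ _))
  -- the pair functions and their max
  set pairF : Fin N × Fin N → ℝ → ℝ := fun p u => ‖x p.1 u - x p.2 u‖^2 with hpairF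
  have huniv : (Finset.univ : Finset (Fin N × Fin N)).Nonempty := Finset.univ_nonempty
  set g : ℝ → ℝ := fun u => Finset.univ.sup' huniv (fun p => pairF p u) with hgdef
  -- Lipschitz bound for the pair functions
  set Kg : NNReal := (8 * B * (Km:ℝ)).toNNReal with hKgdef
  have hKgval : (Kg : ℝ) = 8 * B * (Km:ℝ) :=
    Real.coe_toNNReal _ (by positivity)
  have hpairLip : ∀ p : Fin N × Fin N, LipschitzOnWith Kg (pairF p) (Set.Icc 0 s) := by
    intro p
    rw [lipschitzOnWith_iff_dist_le_mul]
    intro u hu v hv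
    set y := x p.1 u - x p.2 u
    set z := x p.1 v - x p.2 v
    have hyz : ‖y - z‖ ≤ 2 * (Km:ℝ) * dist u v := by
      have h1 := hKmd p.1 u hu v hv
      have h2 := hKmd p.2 u hu v hv
      calc ‖y - z‖ = ‖(x p.1 u - x p.1 v) - (x p.2 u - x p.2 v)‖ := by
            congr 1; simp only [y, z]; abel
        _ ≤ ‖x p.1 u - x p.1 v‖ + ‖x p.2 u - x p.2 v‖ := norm_sub_le _ _
        _ ≤ (Km:ℝ) * dist u v + (Km:ℝ) * dist u v := by
            rw [← dist_eq_norm, ← dist_eq_norm]; exact add_le_add h1 h2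
        _ = 2 * (Km:ℝ) * dist u v := by ring
    have hy : ‖y‖ ≤ 2 * B := by
      calc ‖y‖ ≤ ‖x p.1 u‖ + ‖x p.2 u‖ := norm_sub_le _ _
        _ ≤ B + B := add_le_add (hBball _ _ hu) (hBball _ _ hu)
        _ = 2 * B := by ring
    have hz : ‖z‖ ≤ 2 * B := by
      calc ‖z‖ ≤ ‖x p.1 v‖ + ‖x p.2 v‖ := norm_sub_le _ _
        _ ≤ B + B := add_le_add (hBball _ _ hv) (hBball _ _ hv)
        _ = 2 * B := by ring
    have habs : |‖y‖^2 - ‖z‖^2| ≤ 4 * B * ‖y - z‖ := by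
      have h1 : ‖y‖^2 - ‖z‖^2 = (‖y‖ - ‖z‖) * (‖y‖ + ‖z‖) := by ring
      rw [h1, abs_mul]
      have h2 : |‖y‖ - ‖z‖| ≤ ‖y - z‖ := abs_norm_sub_norm_le y z
      have h3 : |‖y‖ + ‖z‖| ≤ 4 * B := by
        rw [abs_of_nonneg (by positivity)]; linarith
      nlinarith [abs_nonneg (‖y‖ - ‖z‖), norm_nonneg (y - z)]
    rw [Real.dist_eq]
    calc |pairF p u - pairF p v| = |‖y‖^2 - ‖z‖^2| := rfl
      _ ≤ 4 * B * ‖y - z‖ := habs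
      _ ≤ 4 * B * (2 * (Km:ℝ) * dist u v) := by
          apply mul_le_mul_of_nonneg_left hyz (by positivity)
      _ = (Kg:ℝ) * dist u v := by rw [hKgval]; ring_nf
  -- key inner product inequality
  have key2 : ∀ u : ℝ, 0 ≤ u → ∀ i j : Fin N,
      (∀ k, ‖x k u - x j u‖ ≤ ‖x i u - x j u‖) →
      ⟪x i u - x j u, (N:ℝ)⁻¹ • ∑ k : Fin N, (a i k u * φ ‖x i u - x k u‖) • (x k u - x i u)⟫ ≤ 0 := by
    intro u hu0 i j hk
    rw [real_inner_smul_right]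
    apply mul_nonpos_iff.2
    left
    refine ⟨by positivity, ?_⟩
    rw [inner_sum]
    apply Finset.sum_nonpos
    intro k _
    rw [real_inner_smul_right]
    apply mul_nonpos_iff.2
    left
    constructor
    · exact mul_nonneg ((ha i k).2 u hu0).1 (hφ.2 _ (norm_nonneg _)).le
    · have hrw : x k u - x i u = (x k u - x j u) - (x i u - x j u) := by abel
      rw [hrw, inner_sub_right]
      have h1 : ⟪x i u - x j u, x k u - x j u⟫ ≤ ‖x i u - x j u‖ * ‖x k u - x j u‖ :=
        real_inner_le_norm _ _
      have h2 : ⟪x i u - x j u, x i u - x j u⟫ = ‖x i u - x j u‖^2 :=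
        real_inner_self_eq_norm_sq _
      nlinarith [hk k, norm_nonneg (x i u - x j u), norm_nonneg (x k u - x j u)]
  -- a.e. slope condition for g
  have Hae : ∀ᵐ u ∂(volume : Measure ℝ), u ∈ Set.Ioo t s → ∀ ε : ℝ, 0 < ε →
      ∀ᶠ w in nhdsWithin u (Set.Ioi u), g w ≤ g u + ε * (w - u) := by
    filter_upwards [hx.2] with u hu hIoo ε hε
    have hu0 : (0:ℝ) ≤ u := le_trans ht hIoo.1.le
    have hder := hu hu0
    set v : Fin N → EuclideanSpace ℝ (Fin d) := fun i =>
      (N:ℝ)⁻¹ • ∑ k : Fin N, (a i k u * φ ‖x i u - x k u‖) • (x k u - x i u) with hvdef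
    set dd : Fin N × Fin N → ℝ := fun p =>
      ⟪x p.1 u - x p.2 u, v p.1 - v p.2⟫ + ⟪v p.1 - v p.2, x p.1 u - x p.2 u⟫ with hdd
    have hd : ∀ p ∈ (Finset.univ : Finset (Fin N × Fin N)), HasDerivAt (pairF p) (dd p) u := by
      intro p _
      have hFp : HasDerivAt (fun w => x p.1 w - x p.2 w) (v p.1 - v p.2) u :=
        (hder p.1).sub (hder p.2)
      have h2 := hFp.inner ℝ hFp
      have heq : (fun w => ⟪x p.1 w - x p.2 w, x p.1 w - x p.2 w⟫) = pairF p := by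
        funext w; rw [real_inner_self_eq_norm_sq]
      rw [heq] at h2
      exact h2
    have hneg : ∀ p ∈ (Finset.univ : Finset (Fin N × Fin N)),
        pairF p u = Finset.univ.sup' huniv (fun q => pairF q u) → dd p ≤ 0 := by
      intro p _ hact
      have hmax : ∀ q : Fin N × Fin N, pairF q u ≤ pairF p u := by
        intro q
        rw [hact]; exact Finset.le_sup' (fun q => pairF q u) (Finset.mem_univ q)
      have hnrm : ∀ k l : Fin N, ‖x k u - x l u‖ ≤ ‖x p.1 u - x p.2 u‖ := by
        intro k l
        exact sqle _ _ (norm_nonneg _) (norm_nonneg _) (hmax (k, l))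
      have h1 : ⟪x p.1 u - x p.2 u, v p.1⟫ ≤ 0 :=
        key2 u hu0 p.1 p.2 (fun k => hnrm k p.2)
      have h2 : ⟪x p.2 u - x p.1 u, v p.2⟫ ≤ 0 :=
        key2 u hu0 p.2 p.1 (fun k => (hnrm k p.1).trans (norm_sub_rev _ _).le)
      have hsplit2 : ⟪x p.1 u - x p.2 u, v p.1 - v p.2⟫ =
          ⟪x p.1 u - x p.2 u, v p.1⟫ + ⟪x p.2 u - x p.1 u, v p.2⟫ := by
        rw [inner_sub_right]
        have hneg2 : ⟪x p.2 u - x p.1 u, v p.2⟫ = -⟪x p.1 u - x p.2 u, v p.2⟫ := by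
          rw [← inner_neg_left]; congr 1; abel
        rw [hneg2]; ring
      have hcomm : ⟪v p.1 - v p.2, x p.1 u - x p.2 u⟫ =
          ⟪x p.1 u - x p.2 u, v p.1 - v p.2⟫ := real_inner_comm _ _
      simp only [hdd]
      rw [hcomm, hsplit2]
      linarith
    exact slope_of_max Finset.univ huniv pairF u dd hd hneg ε hε
  -- g is nonincreasing from t to s
  have hgmono : g s ≤ g t := by
    apply antitone_of_ae_slope g t s hts Kg _ Hae
    exact LipschitzOnWith.mono (lipschitzOnWith_finset_sup' _ huniv pairF Kg _ (fun p _ => hpairLip p))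
      (Set.Icc_subset_Icc_left ht)
  -- conclude
  set T : ℝ := mDiam (fun i => x i t) with hT
  have hbdd1 : ∀ i : Fin N, BddAbove (Set.range fun j => ‖x i t - x j t‖) :=
    fun i => (Set.finite_range _).bddAbove
  have hbdd2 : BddAbove (Set.range fun i => ⨆ j, ‖x i t - x j t‖) :=
    (Set.finite_range _).bddAbove
  have hTle : ∀ i j, ‖x i t - x j t‖ ≤ T := by
    intro i j
    calc ‖x i t - x j t‖ ≤ ⨆ j, ‖x i t - x j t‖ := le_ciSup (hbdd1 i) j
      _ ≤ T := le_ciSup hbdd2 i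
  have hT0 : 0 ≤ T := le_trans (norm_nonneg _) (hTle ⟨0, hN⟩ ⟨0, hN⟩)
  have hgt : g t ≤ T^2 := by
    apply Finset.sup'_le
    intro p _
    exact pow_le_pow_left₀ (norm_nonneg _) (hTle p.1 p.2) 2
  have hfin2 : ∀ i j, ‖x i s - x j s‖ ≤ T := by
    intro i j
    apply sqle _ _ (norm_nonneg _) hT0
    calc ‖x i s - x j s‖^2 = pairF (i, j) s := rfl
      _ ≤ g s := Finset.le_sup' (fun p => pairF p s) (Finset.mem_univ (i, j))
      _ ≤ g t := hgmono
      _ ≤ T^2 := hgt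
  exact ciSup_le fun i => ciSup_le fun j => hfin2 i j
end
end

section
/- Let x(·) be a solution of the nonlinear multiagent system and let (i,j) be a pair of indices such that |x_i(t) − x_j(t)| = D(x(t)) at some time t ≥ 0. Then for every s ≥ t: (a) ⟨y, x_i(t) − x_j(t)⟩ < ⟨x_i(t), x_i(t) − x_j(t)⟩ for every y ∈ conv{x_1(s),…,x_N(s)} with y ≠ x_i(t); and (b) ⟨x_j(t), x_i(t) − x_j(t)⟩ < ⟨y, x_i(t) − x_j(t)⟩ for every y ∈ conv{x_1(s),…,x_N(s)} with y ≠ x_j(t). -/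
open MeasureTheory Finset

noncomputable section

open intervalIntegral Filter in
lemma ftc_aux {F : ℝ → ℝ} {a b : ℝ} (hab : a < b) {K : NNReal}
    (hF : LipschitzOnWith K F (Set.Icc a (b+1)))
    (h : ∀ᵐ σ ∂(volume : Measure ℝ), σ ∈ Set.Ioo a b → ∃ g, g ≤ 0 ∧ HasDerivAt F g σ) :
    F b ≤ F a := by
  have hcont : ContinuousOn F (Set.Icc a (b+1)) := hF.continuousOn
  have hdist : ∀ u w : ℝ, u ∈ Set.Icc a (b+1) → w ∈ Set.Icc a (b+1) →
      |F u - F w| ≤ (K : ℝ) * |u - w| := by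
    intro u w hu hw
    have := lipschitzOnWith_iff_dist_le_mul.mp hF u hu w hw
    simpa [Real.dist_eq] using this
  have hsub : ∀ c d : ℝ, c ∈ Set.Icc a (b+1) → d ∈ Set.Icc a (b+1) →
      IntervalIntegrable F volume c d := by
    intro c d hc hd
    exact (hcont.mono (Set.uIcc_subset_Icc hc hd)).intervalIntegrable
  set μ := (volume : Measure ℝ).restrict (Set.Ioc a b) with hμ
  set q : ℕ → ℝ → ℝ := fun n σ => ((n:ℝ)+1) * (F (σ + ((n:ℝ)+1)⁻¹) - F σ) with hq
  have hnpos : ∀ n : ℕ, (0:ℝ) < ((n:ℝ)+1)⁻¹ := fun n => by positivity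
  have hnle : ∀ n : ℕ, ((n:ℝ)+1)⁻¹ ≤ 1 := by
    intro n
    rw [inv_le_one_iff₀]; right; linarith [Nat.cast_nonneg (α := ℝ) n]
  -- step A : value of the integral of q n
  have stepA : ∀ n : ℕ, ∫ σ, q n σ ∂μ
      = ((n:ℝ)+1) * ((∫ u in b..(b + ((n:ℝ)+1)⁻¹), F u) - ∫ u in a..(a + ((n:ℝ)+1)⁻¹), F u) := by
    intro n
    set hh := ((n:ℝ)+1)⁻¹ with hhh
    have h0 := hnpos n
    have h1 := hnle n
    have int1 : IntervalIntegrable (fun σ => F (σ + hh)) volume a b := by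
      have := (hsub (a+hh) (b+hh) ⟨by linarith, by linarith⟩ ⟨by linarith, by linarith⟩).comp_add_right hh
      simpa using this
    have int2 : IntervalIntegrable F volume a b :=
      hsub a b ⟨le_rfl, by linarith⟩ ⟨by linarith, by linarith⟩
    have e1 : ∫ σ, q n σ ∂μ = ∫ σ in a..b, q n σ := (integral_of_le hab.le).symm
    rw [e1]
    have e2 : ∫ σ in a..b, q n σ = ((n:ℝ)+1) * ((∫ σ in a..b, F (σ + hh)) - ∫ σ in a..b, F σ) := by
      rw [hq]
      rw [intervalIntegral.integral_const_mul, intervalIntegral.integral_sub int1 int2]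
    rw [e2]
    have e3 : (∫ σ in a..b, F (σ + hh)) = ∫ u in (a+hh)..(b+hh), F u :=
      intervalIntegral.integral_comp_add_right F hh
    rw [e3]
    have c1 : (∫ u in a..(a+hh), F u) + ∫ u in (a+hh)..(b+hh), F u = ∫ u in a..(b+hh), F u :=
      integral_add_adjacent_intervals
        (hsub a (a+hh) ⟨le_rfl, by linarith⟩ ⟨by linarith, by linarith⟩)
        (hsub (a+hh) (b+hh) ⟨by linarith, by linarith⟩ ⟨by linarith, by linarith⟩)
    have c2 : (∫ u in a..b, F u) + ∫ u in b..(b+hh), F u = ∫ u in a..(b+hh), F u :=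
      integral_add_adjacent_intervals
        (hsub a b ⟨le_rfl, by linarith⟩ ⟨by linarith, by linarith⟩)
        (hsub b (b+hh) ⟨by linarith, by linarith⟩ ⟨by linarith, by linarith⟩)
    have : (∫ u in (a+hh)..(b+hh), F u) - ∫ u in a..b, F u
        = (∫ u in b..(b+hh), F u) - ∫ u in a..(a+hh), F u := by linarith
    rw [this]
  -- endpoint estimate
  have endpt : ∀ (n : ℕ) (c : ℝ), c ∈ Set.Icc a b →
      |((n:ℝ)+1) * (∫ u in c..(c + ((n:ℝ)+1)⁻¹), F u) - F c| ≤ (K:ℝ) * ((n:ℝ)+1)⁻¹ := by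
    intro n c hc
    set hh := ((n:ℝ)+1)⁻¹ with hhh
    have h0 := hnpos n
    have h1 := hnle n
    have hcmem : c ∈ Set.Icc a (b+1) := ⟨hc.1, by linarith [hc.2]⟩
    have hIcc : ∀ u : ℝ, u ∈ Set.uIoc c (c+hh) → ‖F u - F c‖ ≤ (K:ℝ) * hh := by
      intro u hu
      rw [Set.uIoc_of_le (by linarith)] at hu
      have hum : u ∈ Set.Icc a (b+1) := ⟨by linarith [hc.1, hu.1], by linarith [hu.2, hc.2]⟩
      have := hdist u c hum hcmem
      have habs : |u - c| ≤ hh := by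
        rw [abs_of_nonneg (by linarith [hu.1])]; linarith [hu.2]
      calc ‖F u - F c‖ = |F u - F c| := rfl
        _ ≤ (K:ℝ) * |u - c| := this
        _ ≤ (K:ℝ) * hh := by
            exact mul_le_mul_of_nonneg_left habs (by positivity)
    have hFcint : IntervalIntegrable (fun _ => F c) volume c (c+hh) := intervalIntegrable_const
    have hFint : IntervalIntegrable F volume c (c+hh) :=
      hsub c (c+hh) hcmem ⟨by linarith [hc.1], by linarith [hc.2]⟩
    have e1 : (∫ u in c..(c+hh), F u) - hh * F c = ∫ u in c..(c+hh), (F u - F c) := by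
      rw [intervalIntegral.integral_sub hFint hFcint, intervalIntegral.integral_const]
      simp [smul_eq_mul]
    have e2 : ‖∫ u in c..(c+hh), (F u - F c)‖ ≤ ((K:ℝ) * hh) * |(c+hh) - c| :=
      intervalIntegral.norm_integral_le_of_norm_le_const hIcc
    have e3 : |(∫ u in c..(c+hh), F u) - hh * F c| ≤ (K:ℝ) * hh * hh := by
      rw [e1]
      calc |∫ u in c..(c+hh), (F u - F c)| ≤ ((K:ℝ) * hh) * |(c+hh) - c| := e2
        _ = (K:ℝ) * hh * hh := by rw [add_sub_cancel_left, abs_of_pos h0]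
    have key : ((n:ℝ)+1) * (∫ u in c..(c + hh), F u) - F c
        = ((n:ℝ)+1) * ((∫ u in c..(c+hh), F u) - hh * F c) := by
      have h2 : ((n:ℝ)+1) * hh = 1 := by
        rw [hhh, mul_inv_cancel₀]; positivity
      rw [mul_sub, ← mul_assoc, h2, one_mul]
    rw [key, abs_mul, abs_of_pos (show (0:ℝ) < (n:ℝ)+1 by positivity)]
    calc ((n:ℝ)+1) * |(∫ u in c..(c+hh), F u) - hh * F c| ≤ ((n:ℝ)+1) * ((K:ℝ) * hh * hh) := by
          exact mul_le_mul_of_nonneg_left e3 (by positivity)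
      _ = (((n:ℝ)+1) * hh) * ((K:ℝ) * hh) := by ring
      _ = (K:ℝ) * hh := by
          rw [hhh, mul_inv_cancel₀ (by positivity : ((n:ℝ)+1) ≠ 0), one_mul]
  -- step B : tendsto of the integrals to F b - F a
  have stepB : Tendsto (fun n => ∫ σ, q n σ ∂μ) atTop (nhds (F b - F a)) := by
    rw [tendsto_iff_dist_tendsto_zero]
    have htnd : Tendsto (fun n : ℕ => 2 * (K:ℝ) * ((n:ℝ)+1)⁻¹) atTop (nhds 0) := by
      have : Tendsto (fun n : ℕ => ((n:ℝ)+1)⁻¹) atTop (nhds 0) := by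
        simpa [one_div] using tendsto_one_div_add_atTop_nhds_zero_nat (𝕜 := ℝ)
      simpa using this.const_mul (2 * (K:ℝ))
    have hbnd : ∀ n : ℕ, dist (∫ σ, q n σ ∂μ) (F b - F a) ≤ 2 * (K:ℝ) * ((n:ℝ)+1)⁻¹ := by
      intro n
      rw [Real.dist_eq, stepA n]
      have e1 := endpt n b ⟨hab.le, le_rfl⟩
      have e2 := endpt n a ⟨le_rfl, hab.le⟩
      set A1 := ((n:ℝ)+1) * (∫ u in b..(b + ((n:ℝ)+1)⁻¹), F u)
      set A2 := ((n:ℝ)+1) * (∫ u in a..(a + ((n:ℝ)+1)⁻¹), F u)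
      have : ((n:ℝ)+1) * ((∫ u in b..(b + ((n:ℝ)+1)⁻¹), F u) - ∫ u in a..(a + ((n:ℝ)+1)⁻¹), F u)
          - (F b - F a) = (A1 - F b) - (A2 - F a) := by ring
      rw [this]
      calc |(A1 - F b) - (A2 - F a)| ≤ |A1 - F b| + |A2 - F a| := abs_sub _ _
        _ ≤ 2 * (K:ℝ) * ((n:ℝ)+1)⁻¹ := by linarith
    exact squeeze_zero (fun n => dist_nonneg) hbnd htnd
  -- step C : dominated convergence towards the integral of the derivative
  have hmeas : ∀ n : ℕ, AEStronglyMeasurable (q n) μ := by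
    intro n
    apply ContinuousOn.aestronglyMeasurable _ measurableSet_Ioc
    have h0 := hnpos n
    have h1 := hnle n
    have c1 : ContinuousOn (fun σ : ℝ => F (σ + ((n:ℝ)+1)⁻¹)) (Set.Ioc a b) := by
      apply hcont.comp (continuous_add_right _).continuousOn
      intro σ hσ
      exact ⟨by linarith [hσ.1], by linarith [hσ.2]⟩
    have c2 : ContinuousOn F (Set.Ioc a b) :=
      hcont.mono (fun σ hσ => ⟨hσ.1.le, by linarith [hσ.2]⟩)
    exact continuousOn_const.mul (c1.sub c2)
  have hbound : ∀ n : ℕ, ∀ᵐ σ ∂μ, ‖q n σ‖ ≤ (K:ℝ) := by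
    intro n
    rw [ae_restrict_iff' measurableSet_Ioc]
    apply Filter.Eventually.of_forall
    intro σ hσ
    have h0 := hnpos n
    have h1 := hnle n
    have hm1 : σ + ((n:ℝ)+1)⁻¹ ∈ Set.Icc a (b+1) := ⟨by linarith [hσ.1], by linarith [hσ.2]⟩
    have hm2 : σ ∈ Set.Icc a (b+1) := ⟨hσ.1.le, by linarith [hσ.2]⟩
    have := hdist _ _ hm1 hm2
    have habs : |σ + ((n:ℝ)+1)⁻¹ - σ| = ((n:ℝ)+1)⁻¹ := by
      rw [add_sub_cancel_left, abs_of_pos h0]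
    rw [habs] at this
    have : ‖q n σ‖ = ((n:ℝ)+1) * |F (σ + ((n:ℝ)+1)⁻¹) - F σ| := by
      rw [hq]; simp [abs_mul, abs_of_pos (show (0:ℝ) < (n:ℝ)+1 by positivity)]
    rw [this]
    calc ((n:ℝ)+1) * |F (σ + ((n:ℝ)+1)⁻¹) - F σ| ≤ ((n:ℝ)+1) * ((K:ℝ) * ((n:ℝ)+1)⁻¹) := by
          exact mul_le_mul_of_nonneg_left (hdist _ _ hm1 hm2 |>.trans (by rw [habs])) (by positivity)
      _ = (K:ℝ) := by field_simp
  have hb_ne : ∀ᵐ σ ∂(volume : Measure ℝ), σ ≠ b := by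
    rw [ae_iff]
    have : {σ : ℝ | ¬σ ≠ b} = {b} := by ext σ; simp
    rw [this, Real.volume_singleton]
  have hlim : ∀ᵐ σ ∂μ, Tendsto (fun n => q n σ) atTop (nhds (deriv F σ)) := by
    filter_upwards [ae_restrict_of_ae h, ae_restrict_of_ae hb_ne,
      ae_restrict_mem measurableSet_Ioc] with σ hσ1 hσ2 hσ3
    have hσoo : σ ∈ Set.Ioo a b := ⟨hσ3.1, lt_of_le_of_ne hσ3.2 hσ2⟩
    obtain ⟨g, hg0, hg⟩ := hσ1 hσoo
    rw [hg.deriv]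
    have hslope := hasDerivAt_iff_tendsto_slope.mp hg
    have hseq : Tendsto (fun n : ℕ => σ + ((n:ℝ)+1)⁻¹) atTop (nhdsWithin σ {σ}ᶜ) := by
      rw [tendsto_nhdsWithin_iff]
      constructor
      · have : Tendsto (fun n : ℕ => ((n:ℝ)+1)⁻¹) atTop (nhds 0) := by
          simpa [one_div] using tendsto_one_div_add_atTop_nhds_zero_nat (𝕜 := ℝ)
        simpa using tendsto_const_nhds.add this
      · apply Filter.Eventually.of_forall
        intro n
        simp only [Set.mem_compl_iff, Set.mem_singleton_iff]
        have := hnpos n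
        intro hcontra
        nlinarith [hnpos n]
    have := hslope.comp hseq
    apply this.congr
    intro n
    have h0 := hnpos n
    simp only [Function.comp_apply, slope_def_field]
    rw [add_sub_cancel_left]
    rw [div_eq_mul_inv, inv_inv, hq, mul_comm]
  have hnonpos : ∀ᵐ σ ∂μ, deriv F σ ≤ 0 := by
    filter_upwards [ae_restrict_of_ae h, ae_restrict_of_ae hb_ne,
      ae_restrict_mem measurableSet_Ioc] with σ hσ1 hσ2 hσ3
    obtain ⟨g, hg0, hg⟩ := hσ1 ⟨hσ3.1, lt_of_le_of_ne hσ3.2 hσ2⟩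
    rw [hg.deriv]; exact hg0
  have hdct := MeasureTheory.tendsto_integral_of_dominated_convergence
    (F := q) (f := fun σ => deriv F σ) (bound := fun _ => (K:ℝ)) hmeas
    (by
      rw [integrable_const_iff]
      right
      exact ⟨by rw [hμ, Measure.restrict_apply_univ]; exact measure_Ioc_lt_top⟩) hbound hlim
  have hint_nonpos : ∫ σ, deriv F σ ∂μ ≤ 0 := integral_nonpos_of_ae hnonpos
  have := tendsto_nhds_unique stepB hdct
  linarith

-- geometry equality-case lemma
lemma inner_le_and_eq_case {E : Type*} [NormedAddCommGroup E] [InnerProductSpace ℝ E]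
    {u w z : E} (h : ‖z - w‖ ≤ ‖u - w‖) :
    (inner ℝ z (u - w) : ℝ) ≤ (inner ℝ u (u - w) : ℝ) ∧
      ((inner ℝ z (u - w) : ℝ) = (inner ℝ u (u - w) : ℝ) → z = u) := by
  set v := u - w with hv
  have cs : (inner ℝ (z - w) v : ℝ) ≤ ‖z - w‖ * ‖v‖ := real_inner_le_norm _ _
  have h1 : (inner ℝ (z - w) v : ℝ) ≤ ‖v‖ * ‖v‖ :=
    cs.trans (mul_le_mul_of_nonneg_right h (norm_nonneg _))
  have hzv : (inner ℝ (z - w) v : ℝ) = (inner ℝ z v : ℝ) - (inner ℝ w v : ℝ) := inner_sub_left _ _ _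
  have huv : (inner ℝ (u - w) v : ℝ) = (inner ℝ u v : ℝ) - (inner ℝ w v : ℝ) := inner_sub_left _ _ _
  have hvv : (inner ℝ (u - w) v : ℝ) = ‖v‖ * ‖v‖ := by
    rw [hv]; exact real_inner_self_eq_norm_mul_norm v
  constructor
  · linarith
  · intro heq
    have h2 : (inner ℝ (z - w) v : ℝ) = ‖v‖ * ‖v‖ := by linarith
    have h3 : ‖z - u‖ ^ 2 = ‖(z - w) - v‖ ^ 2 := by
      congr 1
      rw [hv, sub_sub_sub_cancel_right]
    have h4 : ‖(z - w) - v‖ ^ 2 = ‖z - w‖ ^ 2 - 2 * (inner ℝ (z - w) v : ℝ) + ‖v‖ ^ 2 :=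
      norm_sub_sq_real _ _
    have h5 : ‖z - w‖ ^ 2 ≤ ‖v‖ ^ 2 := by
      rw [hv]
      exact pow_le_pow_left₀ (norm_nonneg _) h 2
    have h6 : ‖z - u‖ ^ 2 ≤ 0 := by
      rw [h3, h4, h2]
      nlinarith [norm_nonneg v]
    have h7 : ‖z - u‖ = 0 := by
      nlinarith [norm_nonneg (z - u), sq_nonneg (‖z - u‖)]
    rw [← sub_eq_zero]
    exact norm_eq_zero.mp h7


lemma le_mDiam {N d : ℕ} [Nonempty (Fin N)] (g : Fin N → EuclideanSpace ℝ (Fin d)) (k l : Fin N) :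
    ‖g k - g l‖ ≤ mDiam g := by
  have h1 : ‖g k - g l‖ ≤ ⨆ l' : Fin N, ‖g k - g l'‖ :=
    le_ciSup (f := fun l' => ‖g k - g l'‖) (Set.Finite.bddAbove (Set.finite_range _)) l
  exact h1.trans (le_ciSup (f := fun k' => ⨆ l' : Fin N, ‖g k' - g l'‖)
    (Set.Finite.bddAbove (Set.finite_range _)) k)

lemma halfspace_inv {N d : ℕ} {a : Fin N → Fin N → ℝ → ℝ} {φ : ℝ → ℝ}
    {x : Fin N → ℝ → EuclideanSpace ℝ (Fin d)}
    (ha : ValidSignal N a) (hφ : ValidKernel φ) (hx : IsMASol a φ x)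
    (H : (Finset.univ : Finset (Fin N)).Nonempty)
    (f : EuclideanSpace ℝ (Fin d) →L[ℝ] ℝ) {t s : ℝ} (ht : 0 ≤ t) (hts : t ≤ s) :
    Finset.univ.sup' H (fun l => f (x l s)) ≤ Finset.univ.sup' H (fun l => f (x l t)) := by
  rcases eq_or_lt_of_le hts with rfl | hlt
  · exact le_rfl
  set F : ℝ → ℝ := fun σ => Finset.univ.sup' H (fun l => f (x l σ)) with hF
  set R : ℝ := s + 1 with hR
  have hR0 : (0:ℝ) < R := by linarith
  have hKk : ∀ k : Fin N, ∃ Kk : NNReal,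
      LipschitzOnWith Kk (fun σ => f (x k σ)) (Set.Icc 0 R) := by
    intro k
    obtain ⟨Kk, hKk⟩ := hx.1 k R hR0
    exact ⟨‖f‖₊ * Kk, f.lipschitz.comp_lipschitzOnWith hKk⟩
  choose Kk hKk using hKk
  set K : NNReal := Finset.univ.sup Kk with hK
  have hKle : ∀ k : Fin N, ((Kk k : NNReal) : ℝ) ≤ (K : ℝ) := by
    intro k; exact_mod_cast Finset.le_sup (Finset.mem_univ k)
  have hkey : ∀ u w : ℝ, u ∈ Set.Icc 0 R → w ∈ Set.Icc 0 R →
      F u ≤ F w + (K:ℝ) * dist u w := by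
    intro u w hu hw
    apply Finset.sup'_le
    intro k _
    have h1 : dist (f (x k u)) (f (x k w)) ≤ (Kk k : ℝ) * dist u w :=
      lipschitzOnWith_iff_dist_le_mul.mp (hKk k) u hu w hw
    have h2 : f (x k u) - f (x k w) ≤ (K:ℝ) * dist u w := by
      calc f (x k u) - f (x k w) ≤ |f (x k u) - f (x k w)| := le_abs_self _
        _ = dist (f (x k u)) (f (x k w)) := (Real.dist_eq _ _).symm
        _ ≤ (Kk k : ℝ) * dist u w := h1
        _ ≤ (K:ℝ) * dist u w := mul_le_mul_of_nonneg_right (hKle k) dist_nonneg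
    have h3 : f (x k w) ≤ F w := Finset.le_sup' (fun l => f (x l w)) (Finset.mem_univ k)
    linarith
  have hFK : LipschitzOnWith K F (Set.Icc 0 R) := by
    rw [lipschitzOnWith_iff_dist_le_mul]
    intro u hu w hw
    rw [Real.dist_eq]
    rw [abs_sub_le_iff]
    constructor
    · linarith [hkey u w hu hw, Real.dist_eq u w, le_abs_self (u - w),
        (by rw [Real.dist_eq] : dist u w = |u - w|)]
    · have := hkey w u hw hu
      rw [dist_comm] at this
      linarith [(by rw [Real.dist_eq] : dist u w = |u - w|)]
  -- global Lipschitz extension via clamping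
  set cl : ℝ → ℝ := fun σ => max 0 (min σ R) with hcl
  have hclmem : ∀ σ, cl σ ∈ Set.Icc 0 R :=
    fun σ => ⟨le_max_left _ _, max_le hR0.le (min_le_right _ _)⟩
  have hclLip : LipschitzWith 1 cl := by
    have h1 : LipschitzWith 1 (fun σ : ℝ => min σ R) := by
      have := LipschitzWith.min (LipschitzWith.id (α := ℝ)) (LipschitzWith.const R)
      simpa using this
    have h2 : LipschitzWith 1 (fun σ : ℝ => max 0 σ) := by
      have := LipschitzWith.max (LipschitzWith.const (0:ℝ)) (LipschitzWith.id (α := ℝ))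
      simpa using this
    have := h2.comp h1
    rw [mul_one] at this
    exact this
  set G : ℝ → ℝ := F ∘ cl with hG
  have hGLip : LipschitzWith (K * 1) G := by
    rw [← lipschitzOnWith_univ]
    exact hFK.comp (hclLip.lipschitzOnWith) (fun σ _ => hclmem σ)
  have hGdiff : ∀ᵐ σ ∂(volume : Measure ℝ), DifferentiableAt ℝ G σ :=
    hGLip.ae_differentiableAt
  -- a.e. derivative of F is nonpositive in (t, s)
  have haed : ∀ᵐ σ ∂(volume : Measure ℝ), σ ∈ Set.Ioo t s → ∃ g, g ≤ 0 ∧ HasDerivAt F g σ := by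
    filter_upwards [hx.2, hGdiff] with σ hode hGd
    intro hσ
    have hσ0 : 0 ≤ σ := le_trans ht hσ.1.le
    have hσR : σ < R := by have := hσ.2; linarith
    have hσ0' : t < σ := hσ.1
    -- F = G near σ … σ ∈ Ioo (something) ; need σ > 0 : σ > t ≥ 0, but t could be 0 and σ > 0 anyway
    have hσpos : 0 < σ := lt_of_le_of_lt ht hσ.1
    have heq : F =ᶠ[nhds σ] G := by
      filter_upwards [Ioo_mem_nhds hσpos hσR] with u hu
      have : cl u = u := by
        rw [hcl]
        simp only
        rw [min_eq_left hu.2.le, max_eq_right hu.1.le]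
      simp [hG, Function.comp, this]
    have hFd : DifferentiableAt ℝ F σ := by
      exact (Filter.EventuallyEq.differentiableAt_iff heq).mpr hGd
    have hFder : HasDerivAt F (deriv F σ) σ := hFd.hasDerivAt
    obtain ⟨k, -, hk⟩ := Finset.exists_mem_eq_sup' H (fun l => f (x l σ))
    have hxk := hode hσ0 k
    have hhk : HasDerivAt (fun σ' => f (x k σ'))
        (f ((N : ℝ)⁻¹ • ∑ j : Fin N, (a k j σ * φ ‖x k σ - x j σ‖) • (x j σ - x k σ))) σ :=
      f.hasFDerivAt.comp_hasDerivAt σ hxk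
    have hmin : IsLocalMin (fun σ' => F σ' - f (x k σ')) σ := by
      apply Filter.Eventually.of_forall
      intro u
      have h1 : f (x k u) ≤ F u := Finset.le_sup' (fun l => f (x l u)) (Finset.mem_univ k)
      have h2 : F σ = f (x k σ) := hk
      simp only
      linarith
    have hzero := hmin.hasDerivAt_eq_zero (hFder.sub hhk)
    refine ⟨deriv F σ, ?_, hFder⟩
    have hDval : deriv F σ
        = f ((N : ℝ)⁻¹ • ∑ j : Fin N, (a k j σ * φ ‖x k σ - x j σ‖) • (x j σ - x k σ)) := by
      linarith [sub_eq_zero.mp hzero]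
    rw [hDval]
    have hexp : f ((N : ℝ)⁻¹ • ∑ j : Fin N, (a k j σ * φ ‖x k σ - x j σ‖) • (x j σ - x k σ))
        = (N : ℝ)⁻¹ * ∑ j : Fin N, (a k j σ * φ ‖x k σ - x j σ‖) * (f (x j σ) - f (x k σ)) := by
      rw [f.map_smul, smul_eq_mul, map_sum f]
      congr 1
      apply Finset.sum_congr rfl
      intro j _
      rw [f.map_smul, smul_eq_mul, f.map_sub]
    rw [hexp]
    apply mul_nonpos_of_nonneg_of_nonpos
    · positivity
    · apply Finset.sum_nonpos
      intro l _
      apply mul_nonpos_of_nonneg_of_nonpos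
      · exact mul_nonneg ((ha k l).2 σ hσ0).1 (hφ.2 _ (norm_nonneg _)).le
      · have h5 : f (x l σ) ≤ f (x k σ) :=
          hk ▸ Finset.le_sup' (fun l' => f (x l' σ)) (Finset.mem_univ l)
        linarith
  have hFKsub : LipschitzOnWith K F (Set.Icc t (s+1)) :=
    hFK.mono (Set.Icc_subset_Icc ht (by rw [hR]))
  exact ftc_aux hlt hFKsub haed

lemma aux_main {N d : ℕ}
    {a : Fin N → Fin N → ℝ → ℝ} {φ : ℝ → ℝ}
    (ha : ValidSignal N a) (hφ : ValidKernel φ)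
    {x : Fin N → ℝ → EuclideanSpace ℝ (Fin d)} (hx : IsMASol a φ x)
    (i j : Fin N) (t : ℝ) (ht : 0 ≤ t)
    (hij : ‖x i t - x j t‖ = mDiam (fun k => x k t))
    (s : ℝ) (hts : t ≤ s) :
    ∀ y ∈ convexHull ℝ (Set.range fun k => x k s), y ≠ x i t →
      (inner ℝ y (x i t - x j t) : ℝ) < (inner ℝ (x i t) (x i t - x j t) : ℝ) := by
  classical
  haveI : Nonempty (Fin N) := ⟨i⟩
  have H : (Finset.univ : Finset (Fin N)).Nonempty := ⟨i, Finset.mem_univ i⟩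
  set v := x i t - x j t with hv
  have step1 : ∀ k, (inner ℝ (x k t) v : ℝ) ≤ (inner ℝ (x i t) v : ℝ) ∧
      ((inner ℝ (x k t) v : ℝ) = (inner ℝ (x i t) v : ℝ) → x k t = x i t) := by
    intro k
    have hle : ‖x k t - x j t‖ ≤ ‖x i t - x j t‖ := by
      rw [hij]; exact le_mDiam (fun k' => x k' t) k j
    exact inner_le_and_eq_case hle
  have hullsub : convexHull ℝ (Set.range fun k => x k s)
      ⊆ convexHull ℝ (Set.range fun k => x k t) := by
    intro y hy
    by_contra hnot
    have hclosed : IsClosed (convexHull ℝ (Set.range fun k => x k t)) :=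
      ((Set.finite_range _).isCompact_convexHull ℝ).isClosed
    obtain ⟨f, u, hfu, huy⟩ :=
      geometric_hahn_banach_closed_point (convex_convexHull ℝ _) hclosed hnot
    have hcu : Finset.univ.sup' H (fun l => f (x l t)) < u := by
      rw [Finset.sup'_lt_iff]
      intro l _
      exact hfu _ (subset_convexHull ℝ _ ⟨l, rfl⟩)
    have hhalf : convexHull ℝ (Set.range fun k => x k s)
        ⊆ {z | f z ≤ Finset.univ.sup' H fun l => f (x l t)} := by
      apply convexHull_min
      · rintro _ ⟨k, rfl⟩
        exact le_trans (Finset.le_sup' (fun l => f (x l s)) (Finset.mem_univ k))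
          (halfspace_inv ha hφ hx H f ht hts)
      · exact convex_halfSpace_le ⟨f.map_add, f.map_smul⟩ _
    have := hhalf hy
    simp only [Set.mem_setOf_eq] at this
    linarith
  intro y hy hne
  have hyt := hullsub hy
  set T : Finset (EuclideanSpace ℝ (Fin d)) := Finset.univ.image (fun k => x k t) with hT
  have hTco : (T : Set (EuclideanSpace ℝ (Fin d))) = Set.range fun k => x k t := by
    rw [hT]; rw [Finset.coe_image, Finset.coe_univ, Set.image_univ]
  rw [← hTco, Finset.convexHull_eq] at hyt
  obtain ⟨w, hw0, hw1, hwy⟩ := hyt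
  rw [Finset.centerMass_eq_of_sum_1 _ _ hw1] at hwy
  simp only [id] at hwy
  have hzle : ∀ z ∈ T, (inner ℝ z v : ℝ) ≤ (inner ℝ (x i t) v : ℝ) := by
    intro z hz
    obtain ⟨k, -, rfl⟩ := Finset.mem_image.mp hz
    exact (step1 k).1
  have hzeq : ∀ z ∈ T, (inner ℝ z v : ℝ) = (inner ℝ (x i t) v : ℝ) → z = x i t := by
    intro z hz
    obtain ⟨k, -, rfl⟩ := Finset.mem_image.mp hz
    exact (step1 k).2
  have hinner : (inner ℝ y v : ℝ) = ∑ z ∈ T, w z * (inner ℝ z v : ℝ) := by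
    rw [← hwy, sum_inner]
    apply Finset.sum_congr rfl
    intro z _
    rw [real_inner_smul_left]
  have hle : (inner ℝ y v : ℝ) ≤ (inner ℝ (x i t) v : ℝ) := by
    rw [hinner]
    calc ∑ z ∈ T, w z * (inner ℝ z v : ℝ) ≤ ∑ z ∈ T, w z * (inner ℝ (x i t) v : ℝ) :=
          Finset.sum_le_sum (fun z hz => mul_le_mul_of_nonneg_left (hzle z hz) (hw0 z hz))
      _ = (inner ℝ (x i t) v : ℝ) := by rw [← Finset.sum_mul, hw1, one_mul]
  rcases lt_or_eq_of_le hle with hlt | heq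
  · exact hlt
  · exfalso
    apply hne
    have hsum_eq : ∑ z ∈ T, w z * (inner ℝ z v : ℝ) = ∑ z ∈ T, w z * (inner ℝ (x i t) v : ℝ) := by
      rw [← hinner, heq, ← Finset.sum_mul, hw1, one_mul]
    have hterm := (Finset.sum_eq_sum_iff_of_le
      (fun z hz => mul_le_mul_of_nonneg_left (hzle z hz) (hw0 z hz))).mp hsum_eq
    rw [← hwy]
    have hcongr : ∀ z ∈ T, w z • z = w z • (x i t) := by
      intro z hz
      rcases eq_or_ne (w z) 0 with h0 | h0
      · rw [h0, zero_smul, zero_smul]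
      · have : (inner ℝ z v : ℝ) = (inner ℝ (x i t) v : ℝ) :=
          mul_left_cancel₀ h0 (hterm z hz)
        rw [hzeq z hz this]
    rw [Finset.sum_congr rfl hcongr, ← Finset.sum_smul, hw1, one_smul]

/-- geometry of points maximising the diameter. If `(i,j)` realises the
diameter at time `t`, then for every `s ≥ t` the strict scalar product inequalities hold
for every point of the convex hull of the configuration at time `s` other than `x_i(t)`
(resp. `x_j(t)`). -/
theorem diameter_maximisers_geometry {N d : ℕ} (hN : 1 ≤ N)
    (a : Fin N → Fin N → ℝ → ℝ) (φ : ℝ → ℝ)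
    (ha : ValidSignal N a) (hφ : ValidKernel φ)
    (x : Fin N → ℝ → EuclideanSpace ℝ (Fin d)) (hx : IsMASol a φ x)
    (i j : Fin N) (t : ℝ) (ht : 0 ≤ t)
    (hij : ‖x i t - x j t‖ = mDiam (fun k => x k t))
    (s : ℝ) (hts : t ≤ s) :
    (∀ y ∈ convexHull ℝ (Set.range fun k => x k s), y ≠ x i t →
      (inner ℝ y (x i t - x j t) : ℝ) < (inner ℝ (x i t) (x i t - x j t) : ℝ)) ∧
    (∀ y ∈ convexHull ℝ (Set.range fun k => x k s), y ≠ x j t →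
      (inner ℝ (x j t) (x i t - x j t) : ℝ) < (inner ℝ y (x i t - x j t) : ℝ)) := by
  constructor
  · exact aux_main ha hφ hx i j t ht hij s hts
  · intro y hy hne
    have h := aux_main ha hφ hx j i t ht (by rw [norm_sub_rev]; exact hij) s hts y hy hne
    have e : x i t - x j t = -(x j t - x i t) := (neg_sub _ _).symm
    rw [e, inner_neg_right, inner_neg_right]
    linarith
end
end

section
/- Let (A^n(·)) be any sequence in G_η(τ,μ). Then there exist a subsequence (not relabelled) and a signal A(·) ∈ G_η(τ,μ) such that, for each pair of indices (i,j) and every integrable function f ∈ L¹([0,∞),ℝ), one has ∫_0^∞ a^n_{ij}(t) f(t) dt → ∫_0^∞ a_{ij}(t) f(t) dt as n → ∞ (i.e., G_η(τ,μ) is sequentially compact for the weak-* topology of L^∞([0,∞), ℝ^{N×N})). -/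
open MeasureTheory Finset

noncomputable section

section SPaux
open Filter Topology

noncomputable def spClamp (a : ℝ → ℝ) : ℝ → ℝ := fun t => min 1 (max 0 (a t))

lemma spClamp_mem (a : ℝ → ℝ) (t : ℝ) : spClamp a t ∈ Set.Icc (0:ℝ) 1 :=
  ⟨le_min zero_le_one (le_max_left 0 _), min_le_left _ _⟩

lemma spClamp_abs_le (a : ℝ → ℝ) (t : ℝ) : |spClamp a t| ≤ 1 := by
  have h := spClamp_mem a t
  rw [abs_le]; exact ⟨by linarith [h.1], h.2⟩

lemma spClamp_measurable {a : ℝ → ℝ} (ha : Measurable a) : Measurable (spClamp a) :=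
  measurable_const.min (measurable_const.max ha)

lemma spClamp_eq {a : ℝ → ℝ} {t : ℝ} (h : a t ∈ Set.Icc (0:ℝ) 1) : spClamp a t = a t := by
  simp [spClamp, max_eq_right h.1, min_eq_right h.2]

lemma spClamp_integrableOn {a : ℝ → ℝ} (ha : Measurable a) {s : Set ℝ}
    (hs : volume s < ⊤) : IntegrableOn (spClamp a) s := by
  refine Integrable.mono' (g := fun _ => (1:ℝ)) (integrableOn_const hs.ne)
    ((spClamp_measurable ha).aestronglyMeasurable.restrict) ?_
  exact Filter.Eventually.of_forall fun t => by
    rw [Real.norm_eq_abs]; exact spClamp_abs_le a t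

noncomputable def spPrim (a : ℝ → ℝ) : ℝ → ℝ := fun t => ∫ s in Set.Ioc 0 t, spClamp a s

lemma spPrim_nonpos {a : ℝ → ℝ} {t : ℝ} (h : t ≤ 0) : spPrim a t = 0 := by
  simp [spPrim, Set.Ioc_eq_empty (by linarith : ¬ (0:ℝ) < t)]

lemma spPrim_sub {a : ℝ → ℝ} (ha : Measurable a) {u v : ℝ} (hu : 0 ≤ u) (huv : u ≤ v) :
    spPrim a v - spPrim a u = ∫ s in Set.Ioc u v, spClamp a s := by
  have h := setIntegral_union (f := spClamp a) (μ := volume) (s := Set.Ioc 0 u)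
    (t := Set.Ioc u v) (Set.Ioc_disjoint_Ioc_of_le le_rfl)
    measurableSet_Ioc (spClamp_integrableOn ha measure_Ioc_lt_top)
    (spClamp_integrableOn ha measure_Ioc_lt_top)
  rw [Set.Ioc_union_Ioc_eq_Ioc hu huv] at h
  simp only [spPrim]
  rw [h]; ring

lemma spPrim_mono {a : ℝ → ℝ} (ha : Measurable a) : Monotone (spPrim a) := by
  intro u v huv
  exact setIntegral_mono_set (spClamp_integrableOn ha measure_Ioc_lt_top)
    (Filter.Eventually.of_forall fun t => (spClamp_mem a t).1)
    ((Set.Ioc_subset_Ioc_right huv).eventuallyLE)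

lemma spPrim_sub_le {a : ℝ → ℝ} (ha : Measurable a) {u v : ℝ} (huv : u ≤ v) :
    spPrim a v - spPrim a u ≤ v - u := by
  rcases le_or_gt v 0 with hv | hv
  · rw [spPrim_nonpos hv, spPrim_nonpos (le_trans huv hv)]; linarith
  · set u' := max u 0 with hu'
    have hu'0 : 0 ≤ u' := le_max_right _ _
    have hu'v : u' ≤ v := max_le huv hv.le
    have heq : spPrim a u = spPrim a u' := by
      rcases le_or_gt 0 u with h | h
      · rw [hu', max_eq_left h]
      · rw [spPrim_nonpos h.le, hu', max_eq_right h.le, spPrim_nonpos le_rfl]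
    have hsub := spPrim_sub ha hu'0 hu'v
    have hle : ∫ s in Set.Ioc u' v, spClamp a s ≤ ∫ s in Set.Ioc u' v, (1:ℝ) :=
      setIntegral_mono_on (spClamp_integrableOn ha measure_Ioc_lt_top)
        (integrableOn_const measure_Ioc_lt_top.ne) measurableSet_Ioc
        fun t _ => (spClamp_mem a t).2
    have h1 : ∫ s in Set.Ioc u' v, (1:ℝ) = v - u' := by
      simp [Real.volume_Ioc, ENNReal.toReal_ofReal (sub_nonneg.2 hu'v), hu'v]
    have h2 : v - u' ≤ v - u := sub_le_sub_left (le_max_left u 0) v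
    rw [heq]
    linarith [hsub, hle, h1]

lemma spPrim_dist {a : ℝ → ℝ} (ha : Measurable a) (x y : ℝ) :
    dist (spPrim a x) (spPrim a y) ≤ dist x y := by
  have key : ∀ x y : ℝ, y ≤ x → dist (spPrim a x) (spPrim a y) ≤ dist x y := by
    intro x y h
    rw [Real.dist_eq, Real.dist_eq]
    have h1 : 0 ≤ spPrim a x - spPrim a y := by linarith [spPrim_mono ha h]
    rw [abs_of_nonneg h1, abs_of_nonneg (by linarith : (0:ℝ) ≤ x - y)]
    exact spPrim_sub_le ha h
  rcases le_total y x with h | h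
  · exact key x y h
  · rw [dist_comm, dist_comm x y]; exact key y x h

lemma spPrim_lipschitz {a : ℝ → ℝ} (ha : Measurable a) : LipschitzWith 1 (spPrim a) :=
  LipschitzWith.of_dist_le_mul fun x y => by
    rw [NNReal.coe_one, one_mul]; exact spPrim_dist ha x y

/-! ### FTC for Lipschitz monotone functions -/

lemma spStieltjes_coe {F : ℝ → ℝ} (hm : Monotone F) (hc : Continuous F) :
    ⇑hm.stieltjesFunction = F :=
  funext fun x => rightLim_eq_of_tendsto
    ((hc.tendsto x).mono_left nhdsWithin_le_nhds)

lemma spMono_integral_deriv_le {F : ℝ → ℝ} (hm : Monotone F) (hc : Continuous F)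
    {u v : ℝ} (huv : u ≤ v) :
    ∫ t in Set.Ioc u v, deriv F t ≤ F v - F u := by
  set f := hm.stieltjesFunction with hf
  have hfF : ⇑f = F := spStieltjes_coe hm hc
  have hd := f.ae_hasDerivAt
  rw [hfF] at hd
  have hderiv : ∀ᵐ x ∂(volume : Measure ℝ),
      deriv F x = (f.measure.rnDeriv volume x).toReal :=
    hd.mono fun x hx => hx.deriv
  have e1 : ∫ t in Set.Ioc u v, deriv F t
      = ∫ t in Set.Ioc u v, (f.measure.rnDeriv volume t).toReal :=
    integral_congr_ae (ae_restrict_of_ae hderiv)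
  have e2 : ∫ t in Set.Ioc u v, (f.measure.rnDeriv volume t).toReal
      = (∫⁻ t in Set.Ioc u v, f.measure.rnDeriv volume t).toReal :=
    integral_toReal (Measure.measurable_rnDeriv _ _).aemeasurable
      (ae_restrict_of_ae (Measure.rnDeriv_lt_top _ _))
  have e3 : (∫⁻ t in Set.Ioc u v, f.measure.rnDeriv volume t).toReal
      ≤ (f.measure (Set.Ioc u v)).toReal := by
    refine ENNReal.toReal_mono ?_ (Measure.setLIntegral_rnDeriv_le _)
    rw [f.measure_Ioc]; exact ENNReal.ofReal_ne_top
  have e4 : (f.measure (Set.Ioc u v)).toReal = F v - F u := by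
    rw [f.measure_Ioc, hfF, ENNReal.toReal_ofReal (sub_nonneg.2 (hm huv))]
  rw [e1, e2]; rw [e4] at e3; exact e3

lemma spLipschitz_ftc {F : ℝ → ℝ} (hm : Monotone F) (hl : LipschitzWith 1 F) :
    (∀ᵐ t ∂(volume : Measure ℝ), deriv F t ∈ Set.Icc (0:ℝ) 1) ∧
    ∀ u v : ℝ, u ≤ v → ∫ t in Set.Ioc u v, deriv F t = F v - F u := by
  have hc := hl.continuous
  set G : ℝ → ℝ := fun t => t - F t with hG
  have hGm : Monotone G := by
    intro x y hxy
    have h1 : dist (F x) (F y) ≤ dist x y := by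
      simpa using hl.dist_le_mul x y
    rw [Real.dist_eq, Real.dist_eq] at h1
    have := abs_le.1 h1
    simp only [hG]
    have := neg_le_of_abs_le h1
    have h2 : F y - F x ≤ y - x := by
      have := le_of_abs_le h1
      have habs : F y - F x ≤ |F x - F y| := by
        rw [abs_sub_comm]; exact le_abs_self _
      have : |x - y| = y - x := by rw [abs_sub_comm]; exact abs_of_nonneg (by linarith)
      linarith [le_of_abs_le h1, habs, this]
    linarith
  have hGc : Continuous G := continuous_id.sub hc
  -- derivative facts for F
  have hFd : ∀ᵐ x ∂(volume : Measure ℝ),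
      HasDerivAt F ((hm.stieltjesFunction).measure.rnDeriv volume x).toReal x := by
    have := hm.stieltjesFunction.ae_hasDerivAt
    rwa [spStieltjes_coe hm hc] at this
  have hGd : ∀ᵐ x ∂(volume : Measure ℝ),
      HasDerivAt G ((hGm.stieltjesFunction).measure.rnDeriv volume x).toReal x := by
    have := hGm.stieltjesFunction.ae_hasDerivAt
    rwa [spStieltjes_coe hGm hGc] at this
  have h01 : ∀ᵐ t ∂(volume : Measure ℝ), deriv F t ∈ Set.Icc (0:ℝ) 1 := by
    filter_upwards [hFd, hGd] with x hx hgx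
    constructor
    · rw [hx.deriv]; exact ENNReal.toReal_nonneg
    · have hGd' : HasDerivAt G (1 - deriv F x) x := by
        rw [hx.deriv]; exact (hasDerivAt_id x).sub hx
      have : (1 : ℝ) - deriv F x = ((hGm.stieltjesFunction).measure.rnDeriv volume x).toReal :=
        hGd'.unique hgx
      have h0 : (0:ℝ) ≤ 1 - deriv F x := this ▸ ENNReal.toReal_nonneg
      linarith
  refine ⟨h01, fun u v huv => ?_⟩
  have hmeas : Measurable (deriv F) := measurable_deriv F
  have hint : IntegrableOn (deriv F) (Set.Ioc u v) := by
    refine Integrable.mono' (g := fun _ => (1:ℝ)) (integrableOn_const measure_Ioc_lt_top.ne)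
      hmeas.aestronglyMeasurable.restrict ?_
    refine ae_restrict_of_ae (h01.mono fun x hx => ?_)
    rw [Real.norm_eq_abs, abs_le]
    exact ⟨show -(1:ℝ) ≤ deriv F x by linarith [hx.1], show deriv F x ≤ (1:ℝ) from hx.2⟩
  have h1 : ∫ t in Set.Ioc u v, deriv F t ≤ F v - F u := spMono_integral_deriv_le hm hc huv
  have h2 : ∫ t in Set.Ioc u v, deriv G t ≤ G v - G u := spMono_integral_deriv_le hGm hGc huv
  have hderivG : ∀ᵐ x ∂(volume : Measure ℝ), deriv G x = 1 - deriv F x := by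
    filter_upwards [hFd] with x hx
    have hGd' : HasDerivAt G (1 - deriv F x) x := by
      rw [hx.deriv]; exact (hasDerivAt_id x).sub hx
    exact hGd'.deriv
  have h3 : ∫ t in Set.Ioc u v, deriv G t = (v - u) - ∫ t in Set.Ioc u v, deriv F t := by
    have e : ∫ t in Set.Ioc u v, deriv G t = ∫ t in Set.Ioc u v, (1 - deriv F t) :=
      integral_congr_ae (ae_restrict_of_ae hderivG)
    rw [e, integral_sub (integrableOn_const (C := (1:ℝ)) measure_Ioc_lt_top.ne) hint]
    have : ∫ _ in Set.Ioc u v, (1:ℝ) = v - u := by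
      simp [Real.volume_Ioc, ENNReal.toReal_ofReal (sub_nonneg.2 huv), huv]
    rw [this]
  have hGvu : G v - G u = (v - F v) - (u - F u) := by simp [hG]
  linarith [h1, h2, h3]

lemma spLipschitz_ftc_clamp {F : ℝ → ℝ} (hm : Monotone F) (hl : LipschitzWith 1 F)
    {u v : ℝ} (huv : u ≤ v) :
    ∫ t in Set.Ioc u v, spClamp (deriv F) t = F v - F u := by
  obtain ⟨h01, hftc⟩ := spLipschitz_ftc hm hl
  rw [← hftc u v huv]
  exact integral_congr_ae (ae_restrict_of_ae (h01.mono fun x hx => spClamp_eq hx))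

end SPaux

section SPaux2
open Filter Topology

lemma spTendstoOfApprox {φ : ℕ → ℝ} {c : ℝ}
    (h : ∀ ε : ℝ, 0 < ε → ∃ (Ψ : ℕ → ℝ) (c' : ℝ), Filter.Tendsto Ψ Filter.atTop (nhds c') ∧
      (∀ n, |φ n - Ψ n| ≤ ε) ∧ |c - c'| ≤ ε) :
    Filter.Tendsto φ Filter.atTop (nhds c) := by
  rw [Metric.tendsto_atTop]
  intro ε hε
  obtain ⟨Ψ, c', hten, hφΨ, hcc⟩ := h (ε/4) (by linarith)
  obtain ⟨N0, hN0⟩ := Metric.tendsto_atTop.1 hten (ε/4) (by linarith)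
  refine ⟨N0, fun n hn => ?_⟩
  have h2 := hN0 n hn
  rw [Real.dist_eq] at h2 ⊢
  have h1 := hφΨ n
  have key : φ n - c = (φ n - Ψ n) + (Ψ n - c') + (c' - c) := by ring
  rw [key]
  calc |(φ n - Ψ n) + (Ψ n - c') + (c' - c)|
      ≤ |(φ n - Ψ n) + (Ψ n - c')| + |c' - c| := abs_add_le _ _
    _ ≤ |φ n - Ψ n| + |Ψ n - c'| + |c' - c| := by
        have := abs_add_le (φ n - Ψ n) (Ψ n - c'); linarith
    _ < ε := by
        have h3 : |c' - c| ≤ ε/4 := by rw [abs_sub_comm]; exact hcc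
        linarith

lemma spWeakConvCont {a : ℕ → ℝ → ℝ} {b : ℝ → ℝ}
    (ham : ∀ n, Measurable (a n)) (ha1 : ∀ n t, |a n t| ≤ 1)
    (hbm : Measurable b) (hb1 : ∀ t, |b t| ≤ 1)
    (h : ∀ u v : ℝ, 0 ≤ u → u ≤ v →
      Filter.Tendsto (fun n => ∫ s in Set.Ioc u v, a n s) Filter.atTop
        (nhds (∫ s in Set.Ioc u v, b s)))
    (g : ℝ → ℝ) (hgc : Continuous g) (hgs : HasCompactSupport g) :
    Filter.Tendsto (fun n => ∫ t in Set.Ici (0:ℝ), a n t * g t) Filter.atTop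
      (nhds (∫ t in Set.Ici (0:ℝ), b t * g t)) := by
  have hgint : Integrable g (volume : Measure ℝ) := hgc.integrable_of_hasCompactSupport hgs
  -- find M bounding the support
  obtain ⟨r, hr⟩ := hgs.isBounded.subset_closedBall (0:ℝ)
  set M : ℝ := max r 1 with hM
  have hM0 : 0 < M := lt_of_lt_of_le one_pos (le_max_right _ _)
  have hgzero : ∀ t : ℝ, M < t → g t = 0 := by
    intro t ht
    apply image_eq_zero_of_notMem_tsupport
    intro hmem
    have := hr hmem
    rw [Metric.mem_closedBall, Real.dist_eq, sub_zero] at this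
    have : t ≤ r := le_trans (le_abs_self t) this
    have : r ≤ M := le_max_left _ _
    linarith
  -- reduce the integral over Ici 0 to an interval integral
  have hred : ∀ hh : ℝ → ℝ, Measurable hh → (∀ t, |hh t| ≤ 1) →
      ∫ t in Set.Ici (0:ℝ), hh t * g t = ∫ t in (0:ℝ)..M, hh t * g t := by
    intro hh hhm hh1
    have hint : ∀ s : Set ℝ, IntegrableOn (fun t => hh t * g t) s := by
      intro s
      refine (Integrable.bdd_mul hgint hhm.aestronglyMeasurable (c := 1) (Filter.Eventually.of_forall fun t => ?_)).integrableOn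
      rw [Real.norm_eq_abs]; exact hh1 t
    rw [intervalIntegral.integral_of_le hM0.le]
    rw [setIntegral_congr_set (MeasureTheory.Ioi_ae_eq_Ici (a := (0:ℝ))).symm]
    rw [← Set.Ioc_union_Ioi_eq_Ioi hM0.le]
    rw [setIntegral_union (Set.Ioc_disjoint_Ioi le_rfl) measurableSet_Ioi (hint _) (hint _)]
    have hz : ∫ t in Set.Ioi M, hh t * g t = 0 := by
      rw [setIntegral_congr_fun measurableSet_Ioi (g := fun _ => (0:ℝ))
        (fun t ht => by rw [hgzero t ht, mul_zero])]
      exact integral_zero _ _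
    rw [hz, add_zero]
  have e1 : (fun n => ∫ t in Set.Ici (0:ℝ), a n t * g t)
      = fun n => ∫ t in (0:ℝ)..M, a n t * g t :=
    funext fun n => hred (a n) (ham n) (ha1 n)
  rw [e1, hred b hbm hb1]
  -- now approximate by step functions
  apply spTendstoOfApprox
  intro ε hε
  set ε' : ℝ := ε / (2 * (M + 1)) with hε'
  have hε'pos : 0 < ε' := by positivity
  obtain ⟨δ, hδpos, hδ⟩ := Metric.uniformContinuous_iff.1
    (hgs.uniformContinuous_of_continuous hgc) ε' hε'pos
  obtain ⟨m, hm⟩ := exists_nat_gt (M / δ)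
  have hmpos : 0 < (m:ℝ) := lt_of_le_of_lt (div_nonneg hM0.le hδpos.le) hm
  set π : ℕ → ℝ := fun k => k * (M / m) with hπ
  have hπ0 : π 0 = 0 := by simp [hπ]
  have hπm : π m = M := by simp only [hπ]; field_simp [hmpos.ne']
  have hπstep : ∀ k, π (k+1) - π k = M / m := by
    intro k; simp only [hπ]; push_cast; ring
  have hπmono : ∀ k, π k ≤ π (k+1) := by
    intro k
    have : 0 ≤ M / m := div_nonneg hM0.le hmpos.le
    have := hπstep k; linarith
  have hπnonneg : ∀ k, 0 ≤ π k := by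
    intro k
    simp only [hπ]
    positivity
  have hstep_lt : M / m < δ := by
    rw [div_lt_iff₀ hmpos]
    rw [div_lt_iff₀ hδpos] at hm
    linarith [hm]
  -- the key step-approximation bound
  have key : ∀ hh : ℝ → ℝ, Measurable hh → (∀ t, |hh t| ≤ 1) →
      |(∫ t in (0:ℝ)..M, hh t * g t) -
        ∑ k ∈ Finset.range m, g (π k) * ∫ t in (π k)..(π (k+1)), hh t| ≤ ε' * M := by
    intro hh hhm hh1
    have hint : ∀ u v : ℝ, IntervalIntegrable (fun t => hh t * g t) volume u v := by
      intro u v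
      exact (Integrable.bdd_mul hgint hhm.aestronglyMeasurable
        (c := 1) (Filter.Eventually.of_forall fun t => by rw [Real.norm_eq_abs]; exact hh1 t)).intervalIntegrable
    have hinth : ∀ u v : ℝ, IntervalIntegrable hh volume u v := by
      intro u v
      rw [intervalIntegrable_iff]
      refine Integrable.mono' (g := fun _ => (1:ℝ))
        (integrableOn_const measure_Ioc_lt_top.ne)
        hhm.aestronglyMeasurable.restrict ?_
      exact Filter.Eventually.of_forall fun t => by rw [Real.norm_eq_abs]; exact hh1 t
    have hsplit : ∫ t in (0:ℝ)..M, hh t * g t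
        = ∑ k ∈ Finset.range m, ∫ t in (π k)..(π (k+1)), hh t * g t := by
      have := intervalIntegral.sum_integral_adjacent_intervals (a := π) (n := m)
        (f := fun t => hh t * g t) (μ := volume) (fun k _ => hint _ _)
      rw [hπ0, hπm] at this
      exact this.symm
    rw [hsplit, ← Finset.sum_sub_distrib]
    refine (Finset.abs_sum_le_sum_abs _ _).trans ?_
    have hterm : ∀ k ∈ Finset.range m,
        |(∫ t in (π k)..(π (k+1)), hh t * g t) - g (π k) * ∫ t in (π k)..(π (k+1)), hh t|
          ≤ ε' * (M/m) := by
      intro k _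
      rw [← intervalIntegral.integral_const_mul,
        ← intervalIntegral.integral_sub (hint _ _) ((hinth _ _).const_mul _)]
      have hb : ∀ t ∈ Set.uIoc (π k) (π (k+1)), ‖hh t * g t - g (π k) * hh t‖ ≤ ε' := by
        intro t ht
        rw [Set.uIoc_of_le (hπmono k)] at ht
        have hdist : dist t (π k) < δ := by
          rw [Real.dist_eq, abs_of_nonneg (by linarith [ht.1] : (0:ℝ) ≤ t - π k)]
          have := hπstep k
          linarith [ht.2, hstep_lt]
        have h1 : |g t - g (π k)| ≤ ε' := by
          have := hδ hdist
          rw [Real.dist_eq] at this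
          exact this.le
        have : hh t * g t - g (π k) * hh t = hh t * (g t - g (π k)) := by ring
        rw [this, Real.norm_eq_abs, abs_mul]
        calc |hh t| * |g t - g (π k)| ≤ 1 * ε' :=
              mul_le_mul (hh1 t) h1 (abs_nonneg _) zero_le_one
          _ = ε' := one_mul _
      have hnorm := intervalIntegral.norm_integral_le_of_norm_le_const hb
      rw [Real.norm_eq_abs] at hnorm
      have : |π (k+1) - π k| = M/m := by
        rw [hπstep k]; exact abs_of_nonneg (div_nonneg hM0.le hmpos.le)
      rw [this] at hnorm
      exact hnorm
    refine (Finset.sum_le_sum hterm).trans ?_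
    rw [Finset.sum_const, Finset.card_range, nsmul_eq_mul]
    rw [show (m:ℝ) * (ε' * (M/m)) = ε' * M * ((m:ℝ)/(m:ℝ)) by ring, div_self hmpos.ne',
      mul_one]
  have hε'M : ε' * M ≤ ε := by
    rw [hε']
    rw [div_mul_eq_mul_div, div_le_iff₀ (by positivity : (0:ℝ) < 2 * (M+1))]
    nlinarith [hM0, hε]
  refine ⟨fun n => ∑ k ∈ Finset.range m, g (π k) * ∫ t in (π k)..(π (k+1)), a n t,
    ∑ k ∈ Finset.range m, g (π k) * ∫ t in (π k)..(π (k+1)), b t, ?_, ?_, ?_⟩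
  · refine tendsto_finset_sum _ fun k _ => Filter.Tendsto.const_mul _ ?_
    have hle := hπmono k
    simp_rw [intervalIntegral.integral_of_le hle]
    exact h (π k) (π (k+1)) (hπnonneg k) hle
  · intro n
    exact (key (a n) (ham n) (ha1 n)).trans hε'M
  · exact (key b hbm hb1).trans hε'M

lemma spWeakConv {a : ℕ → ℝ → ℝ} {b : ℝ → ℝ}
    (ham : ∀ n, Measurable (a n)) (ha1 : ∀ n t, |a n t| ≤ 1)
    (hbm : Measurable b) (hb1 : ∀ t, |b t| ≤ 1)
    (h : ∀ u v : ℝ, 0 ≤ u → u ≤ v →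
      Filter.Tendsto (fun n => ∫ s in Set.Ioc u v, a n s) Filter.atTop
        (nhds (∫ s in Set.Ioc u v, b s)))
    (f : ℝ → ℝ) (hf : IntegrableOn f (Set.Ici (0:ℝ))) :
    Filter.Tendsto (fun n => ∫ t in Set.Ici (0:ℝ), a n t * f t) Filter.atTop
      (nhds (∫ t in Set.Ici (0:ℝ), b t * f t)) := by
  apply spTendstoOfApprox
  intro ε hε
  have hf0 : Integrable (Set.indicator (Set.Ici (0:ℝ)) f) (volume : Measure ℝ) :=
    (integrable_indicator_iff measurableSet_Ici).2 hf
  obtain ⟨g, hgs, hgL1, hgc, hgint⟩ := hf0.exists_hasCompactSupport_integral_sub_le hε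
  have hbd : ∀ hh : ℝ → ℝ, Measurable hh → (∀ t, |hh t| ≤ 1) →
      |(∫ t in Set.Ici (0:ℝ), hh t * f t) - ∫ t in Set.Ici (0:ℝ), hh t * g t| ≤ ε := by
    intro hh hhm hh1
    have hif : IntegrableOn (fun t => hh t * f t) (Set.Ici (0:ℝ)) :=
      Integrable.bdd_mul hf hhm.aestronglyMeasurable.restrict
        (c := 1) (Filter.Eventually.of_forall fun t => by rw [Real.norm_eq_abs]; exact hh1 t)
    have hig : IntegrableOn (fun t => hh t * g t) (Set.Ici (0:ℝ)) :=
      Integrable.bdd_mul hgint.integrableOn hhm.aestronglyMeasurable.restrict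
        (c := 1) (Filter.Eventually.of_forall fun t => by rw [Real.norm_eq_abs]; exact hh1 t)
    rw [← integral_sub hif hig]
    have h1 : |∫ t in Set.Ici (0:ℝ), (hh t * f t - hh t * g t)|
        ≤ ∫ t in Set.Ici (0:ℝ), |f t - g t| := by
      have habs : |∫ t in Set.Ici (0:ℝ), (hh t * f t - hh t * g t)|
          ≤ ∫ t in Set.Ici (0:ℝ), |hh t * f t - hh t * g t| := by
        rw [← Real.norm_eq_abs]
        exact (norm_integral_le_integral_norm _).trans (le_of_eq (by simp [Real.norm_eq_abs]))
      refine habs.trans ?_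
      refine setIntegral_mono_on ((hif.sub hig).abs) ((hf.sub hgint.integrableOn).abs)
        measurableSet_Ici fun t _ => ?_
      rw [← mul_sub, abs_mul]
      exact mul_le_of_le_one_left (abs_nonneg _) (hh1 t)
    refine h1.trans ?_
    have h2 : ∫ t in Set.Ici (0:ℝ), |f t - g t|
        = ∫ t in Set.Ici (0:ℝ), |Set.indicator (Set.Ici (0:ℝ)) f t - g t| :=
      setIntegral_congr_fun measurableSet_Ici fun t ht => by
        rw [Set.indicator_of_mem ht]
    rw [h2]
    refine (setIntegral_le_integral ((hf0.sub hgint).abs)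
      (Filter.Eventually.of_forall fun t => abs_nonneg _)).trans ?_
    calc ∫ t, |Set.indicator (Set.Ici (0:ℝ)) f t - g t|
        = ∫ t, ‖Set.indicator (Set.Ici (0:ℝ)) f t - g t‖ := by simp [Real.norm_eq_abs]
      _ ≤ ε := hgL1
  exact ⟨fun n => ∫ t in Set.Ici (0:ℝ), a n t * g t, ∫ t in Set.Ici (0:ℝ), b t * g t,
    spWeakConvCont ham ha1 hbm hb1 h g hgc hgs,
    fun n => hbd (a n) (ham n) (ha1 n), hbd b hbm hb1⟩

end SPaux2

/-- sequential weak-* compactness of the set of scrambling-persistent signals: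
any sequence admits a subsequence converging, tested against every `L¹` function on `[0,∞)`
entrywise, to a scrambling-persistent signal. -/
theorem scramblingPersistent_weakStar_seq_compact {N : ℕ} (hN : 1 ≤ N)
    (τ μ : ℝ) (hτ : 0 < τ) (hμ : μ ∈ Set.Ioc (0 : ℝ) 1)
    (A : ℕ → Fin N → Fin N → ℝ → ℝ)
    (hA : ∀ n, ScramblingPersistent N τ μ (A n)) :
    ∃ ψ : ℕ → ℕ, StrictMono ψ ∧
      ∃ B : Fin N → Fin N → ℝ → ℝ, ScramblingPersistent N τ μ B ∧
        ∀ i j : Fin N, ∀ f : ℝ → ℝ, IntegrableOn f (Set.Ici (0 : ℝ)) →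
          Filter.Tendsto (fun n => ∫ t in Set.Ici (0 : ℝ), A (ψ n) i j t * f t)
            Filter.atTop (nhds (∫ t in Set.Ici (0 : ℝ), B i j t * f t)) := by
  classical
  have hNpos : 0 < N := hN
  have hAm : ∀ n i j, Measurable (A n i j) := fun n i j => ((hA n).1 i j).1
  have hA01 : ∀ n (i j : Fin N) (t : ℝ), 0 ≤ t → A n i j t ∈ Set.Icc (0:ℝ) 1 :=
    fun n i j t ht => ((hA n).1 i j).2 t ht
  -- compactness extraction on rational points
  have hmem : ∀ n, (fun p : ℚ × Fin N × Fin N => spPrim (A n p.2.1 p.2.2) (p.1 : ℝ))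
      ∈ Set.pi Set.univ (fun p : ℚ × Fin N × Fin N =>
        Set.Icc (-(|(p.1 : ℝ)|)) (|(p.1 : ℝ)|)) := by
    intro n p _
    have h1 : |spPrim (A n p.2.1 p.2.2) (p.1:ℝ) - spPrim (A n p.2.1 p.2.2) 0|
        ≤ |(p.1:ℝ) - 0| := by
      have := spPrim_dist (hAm n p.2.1 p.2.2) (p.1:ℝ) 0
      rwa [Real.dist_eq, Real.dist_eq] at this
    rw [spPrim_nonpos le_rfl, sub_zero, sub_zero] at h1
    exact abs_le.1 h1
  obtain ⟨g, -, ψ, hψ, hgconv⟩ :=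
    (isCompact_univ_pi fun p : ℚ × Fin N × Fin N => isCompact_Icc).tendsto_subseq hmem
  have hconvQ : ∀ (i j : Fin N) (q : ℚ),
      Filter.Tendsto (fun n => spPrim (A (ψ n) i j) (q:ℝ)) Filter.atTop
        (nhds (g (q, i, j))) := by
    intro i j q
    exact tendsto_pi_nhds.1 hgconv (q, i, j)
  -- limit functions on ℝ
  have hFex : ∀ i j : Fin N, ∃ Fij : ℝ → ℝ, LipschitzWith 1 Fij ∧
      ∀ q : ℚ, Fij (q:ℝ) = g (q, i, j) := by
    intro i j
    have hlip : LipschitzOnWith 1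
        (Function.extend (fun q : ℚ => (q:ℝ)) (fun q => g (q, i, j)) (fun _ => 0))
        (Set.range fun q : ℚ => (q:ℝ)) := by
      rw [lipschitzOnWith_iff_dist_le_mul]
      rintro x ⟨q, rfl⟩ y ⟨r, rfl⟩
      rw [Rat.cast_injective.extend_apply, Rat.cast_injective.extend_apply,
        NNReal.coe_one, one_mul]
      refine le_of_tendsto ((hconvQ i j q).dist (hconvQ i j r)) ?_
      exact Filter.Eventually.of_forall fun n => spPrim_dist (hAm (ψ n) i j) _ _
    obtain ⟨Fij, hFl, hFeq⟩ := hlip.extend_real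
    refine ⟨Fij, hFl, fun q => ?_⟩
    have := hFeq ⟨q, rfl⟩
    rw [Rat.cast_injective.extend_apply] at this
    exact this.symm
  choose F hFlip hFq using hFex
  -- pointwise convergence everywhere
  have hconvR : ∀ (i j : Fin N) (t : ℝ),
      Filter.Tendsto (fun n => spPrim (A (ψ n) i j) t) Filter.atTop (nhds (F i j t)) := by
    intro i j t
    rw [Metric.tendsto_atTop]
    intro ε hε
    obtain ⟨q, hq⟩ := exists_rat_near t (show (0:ℝ) < ε/3 by linarith)
    obtain ⟨N0, hN0⟩ := Metric.tendsto_atTop.1 (hconvQ i j q) (ε/3) (by linarith)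
    refine ⟨N0, fun n hn => ?_⟩
    have l1 : dist (spPrim (A (ψ n) i j) t) (spPrim (A (ψ n) i j) (q:ℝ)) ≤ dist t (q:ℝ) :=
      spPrim_dist (hAm (ψ n) i j) t (q:ℝ)
    have l2 : dist (spPrim (A (ψ n) i j) (q:ℝ)) (F i j (q:ℝ)) < ε/3 := by
      rw [hFq i j q]; exact hN0 n hn
    have l3 : dist (F i j (q:ℝ)) (F i j t) ≤ dist (q:ℝ) t := by
      have := (hFlip i j).dist_le_mul (q:ℝ) t
      rwa [NNReal.coe_one, one_mul] at this
    have hqt : dist t (q:ℝ) < ε/3 := by rw [Real.dist_eq]; exact hq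
    have htri := dist_triangle4 (spPrim (A (ψ n) i j) t) (spPrim (A (ψ n) i j) (q:ℝ))
      (F i j (q:ℝ)) (F i j t)
    have hqt' : dist (q:ℝ) t < ε/3 := by rwa [dist_comm]
    linarith
  have hFmono : ∀ i j : Fin N, Monotone (F i j) := fun i j u v huv =>
    le_of_tendsto_of_tendsto' (hconvR i j u) (hconvR i j v)
      fun n => spPrim_mono (hAm (ψ n) i j) huv
  -- convergence of increments
  have hinc : ∀ (i j : Fin N) (u v : ℝ), 0 ≤ u → u ≤ v →
      Filter.Tendsto (fun n => ∫ s in Set.Ioc u v, spClamp (A (ψ n) i j) s) Filter.atTop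
        (nhds (∫ s in Set.Ioc u v, spClamp (deriv (F i j)) s)) := by
    intro i j u v hu huv
    have h2 : ∫ s in Set.Ioc u v, spClamp (deriv (F i j)) s = F i j v - F i j u :=
      spLipschitz_ftc_clamp (hFmono i j) (hFlip i j) huv
    rw [h2]
    have := (hconvR i j v).sub (hconvR i j u)
    refine this.congr fun n => ?_
    exact spPrim_sub (hAm (ψ n) i j) hu huv
  refine ⟨ψ, hψ, fun i j => spClamp (deriv (F i j)), ⟨⟨?_, ?_⟩, ?_⟩⟩
  · -- ValidSignal
    intro i j
    exact ⟨spClamp_measurable (measurable_deriv _), fun t _ => spClamp_mem _ t⟩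
  · -- scrambling persistence
    intro t ht
    have hrw : ∀ (n : ℕ) (i j : Fin N), (∫ s in t..t + τ, A n i j s)
        = ∫ s in Set.Ioc t (t + τ), spClamp (A n i j) s := by
      intro n i j
      rw [intervalIntegral.integral_of_le (by linarith)]
      exact setIntegral_congr_fun measurableSet_Ioc fun s hs =>
        (spClamp_eq (hA01 n i j s (le_of_lt (lt_of_le_of_lt ht hs.1)))).symm
    have hrwB : ∀ i j : Fin N, (∫ s in t..t + τ, spClamp (deriv (F i j)) s)
        = ∫ s in Set.Ioc t (t + τ), spClamp (deriv (F i j)) s := fun i j =>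
      intervalIntegral.integral_of_le (by linarith)
    have hNe : Nonempty (Fin N) := ⟨⟨0, hNpos⟩⟩
    unfold scrambling
    refine le_ciInf fun i => le_ciInf fun j => ?_
    simp only [hrwB]
    have hten : Filter.Tendsto (fun n => (N:ℝ)⁻¹ * ∑ k : Fin N,
        min (τ⁻¹ * ∫ s in Set.Ioc t (t + τ), spClamp (A (ψ n) i k) s)
            (τ⁻¹ * ∫ s in Set.Ioc t (t + τ), spClamp (A (ψ n) j k) s)) Filter.atTop
        (nhds ((N:ℝ)⁻¹ * ∑ k : Fin N,
        min (τ⁻¹ * ∫ s in Set.Ioc t (t + τ), spClamp (deriv (F i k)) s)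
            (τ⁻¹ * ∫ s in Set.Ioc t (t + τ), spClamp (deriv (F j k)) s))) := by
      refine Filter.Tendsto.const_mul _ (tendsto_finset_sum _ fun k _ => ?_)
      exact ((hinc i k t (t + τ) ht (by linarith)).const_mul τ⁻¹).min
            ((hinc j k t (t + τ) ht (by linarith)).const_mul τ⁻¹)
    refine ge_of_tendsto hten (Filter.Eventually.of_forall fun n => ?_)
    have h := (hA (ψ n)).2 t ht
    unfold scrambling at h
    have h1 := h.trans (ciInf_le (Set.finite_range _).bddBelow i)
    have h2 := h1.trans (ciInf_le (Set.finite_range _).bddBelow j)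
    simpa only [hrw] using h2
  · intro i j f hf
    have hconv := spWeakConv (a := fun n => spClamp (A (ψ n) i j))
      (b := spClamp (deriv (F i j)))
      (fun n => spClamp_measurable (hAm (ψ n) i j)) (fun n s => spClamp_abs_le _ s)
      (spClamp_measurable (measurable_deriv _)) (spClamp_abs_le _)
      (hinc i j) f hf
    refine hconv.congr fun n => ?_
    exact setIntegral_congr_fun measurableSet_Ici fun s hs =>
      show spClamp (A (ψ n) i j) s * f s = A (ψ n) i j s * f s by
        rw [spClamp_eq (hA01 (ψ n) i j s hs)]
end
end

section
/- Let (A^n(·)) be any sequence in G_{λ₂}(τ,μ). Then there exist a subsequence (not relabelled) and a signal A(·) ∈ G_{λ₂}(τ,μ) such that, for each pair of indices (i,j) and every integrable function f ∈ L¹([0,∞),ℝ), one has ∫_0^∞ a^n_{ij}(t) f(t) dt → ∫_0^∞ a_{ij}(t) f(t) dt as n → ∞ (i.e., G_{λ₂}(τ,μ) is sequentially compact for the weak-* topology of L^∞([0,∞), ℝ^{N×N})). -/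
open MeasureTheory Finset

noncomputable section

namespace CPaux

/-- clamp to [0,1] -/
def clamp (x : ℝ) : ℝ := min 1 (max 0 x)

lemma clamp_mem (x : ℝ) : clamp x ∈ Set.Icc (0:ℝ) 1 :=
  ⟨le_min zero_le_one (le_max_left 0 x), min_le_left _ _⟩

lemma clamp_of_mem {x : ℝ} (h : x ∈ Set.Icc (0:ℝ) 1) : clamp x = x := by
  rcases h with ⟨h0, h1⟩
  simp [clamp, max_eq_right h0, min_eq_right h1]

lemma measurable_clamp : Measurable clamp :=
  (measurable_const.min (measurable_const.max measurable_id))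

/-- truncation of a signal -/
def trunc (a : ℝ → ℝ) (t : ℝ) : ℝ := if 0 ≤ t then clamp (a t) else 0

lemma trunc_mem (a : ℝ → ℝ) (t : ℝ) : trunc a t ∈ Set.Icc (0:ℝ) 1 := by
  unfold trunc; split
  · exact clamp_mem _
  · exact ⟨le_rfl, zero_le_one⟩

lemma trunc_measurable {a : ℝ → ℝ} (ha : Measurable a) : Measurable (trunc a) := by
  unfold trunc
  exact Measurable.ite measurableSet_Ici (measurable_clamp.comp ha) measurable_const

lemma trunc_eq {a : ℝ → ℝ} (hv : ∀ t : ℝ, 0 ≤ t → a t ∈ Set.Icc (0:ℝ) 1)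
    {t : ℝ} (ht : 0 ≤ t) : trunc a t = a t := by
  simp [trunc, ht, clamp_of_mem (hv t ht)]

lemma trunc_intervalIntegrable {a : ℝ → ℝ} (ha : Measurable a) (u v : ℝ) :
    IntervalIntegrable (trunc a) volume u v := by
  apply IntervalIntegrable.mono_fun'
    (g := fun _ => (1:ℝ)) (intervalIntegrable_const)
  · exact ((trunc_measurable ha).aestronglyMeasurable).restrict
  · refine Filter.Eventually.of_forall fun t => ?_
    have h := trunc_mem a t
    show ‖trunc a t‖ ≤ 1
    rw [Real.norm_eq_abs, abs_of_nonneg h.1]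
    exact h.2

/-- primitive of the truncated signal -/
def prim (a : ℝ → ℝ) (t : ℝ) : ℝ := ∫ s in (0:ℝ)..t, trunc a s

lemma prim_sub {a : ℝ → ℝ} (ha : Measurable a) (u v : ℝ) :
    prim a v - prim a u = ∫ s in u..v, trunc a s := by
  have h := intervalIntegral.integral_add_adjacent_intervals
    (trunc_intervalIntegrable ha 0 u) (trunc_intervalIntegrable ha u v)
  unfold prim
  linarith [h]

lemma prim_lipschitz {a : ℝ → ℝ} (ha : Measurable a) : LipschitzWith 1 (prim a) := by
  apply LipschitzWith.of_dist_le_mul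
  intro u v
  rw [Real.dist_eq, Real.dist_eq]
  have h : prim a u - prim a v = ∫ s in v..u, trunc a s := prim_sub ha v u
  rw [h]
  have hb : ∀ x ∈ Set.uIoc v u, ‖trunc a x‖ ≤ 1 := by
    intro x _
    have hx := trunc_mem a x
    rw [Real.norm_eq_abs, abs_of_nonneg hx.1]
    exact hx.2
  have := intervalIntegral.norm_integral_le_of_norm_le_const (C := 1) hb
  rw [Real.norm_eq_abs] at this
  simpa [abs_sub_comm] using this

lemma prim_mono {a : ℝ → ℝ} (ha : Measurable a) : Monotone (prim a) := by
  intro u v huv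
  have h := prim_sub ha u v
  have hnn : 0 ≤ ∫ s in u..v, trunc a s := by
    apply intervalIntegral.integral_nonneg huv
    intro s _
    exact (trunc_mem a s).1
  linarith


lemma prim_zero (a : ℝ → ℝ) : prim a 0 = 0 := intervalIntegral.integral_same

lemma prim_nonpos {a : ℝ → ℝ} (ha : Measurable a) {t : ℝ} (ht : t ≤ 0) :
    prim a t = 0 := by
  unfold prim
  rw [intervalIntegral.integral_symm, intervalIntegral.integral_of_le ht]
  have hcong : ∀ᵐ s ∂(volume.restrict (Set.Ioc t 0)), trunc a s = 0 := by
    rw [MeasureTheory.ae_restrict_iff' measurableSet_Ioc]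
    have h0 : ∀ᵐ s : ℝ ∂(volume : Measure ℝ), s ≠ 0 := by
      refine MeasureTheory.ae_iff.mpr ?_
      simpa using Real.volume_singleton (a := (0:ℝ))
    filter_upwards [h0] with s hs hmem
    have hlt : s < 0 := lt_of_le_of_ne hmem.2 hs
    simp [trunc, not_le.mpr hlt]
  rw [MeasureTheory.integral_congr_ae hcong]
  simp

lemma prim_nonneg {a : ℝ → ℝ} (ha : Measurable a) (t : ℝ) : 0 ≤ prim a t := by
  rcases le_or_gt 0 t with h | h
  · have := prim_mono ha h
    rwa [prim_zero] at this
  · rw [prim_nonpos ha h.le]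

lemma prim_le {a : ℝ → ℝ} (ha : Measurable a) (t : ℝ) : prim a t ≤ max 0 t := by
  rcases le_or_gt 0 t with h | h
  · have := (prim_lipschitz ha).dist_le_mul t 0
    rw [prim_zero, Real.dist_eq, Real.dist_eq, sub_zero, sub_zero] at this
    calc prim a t ≤ |prim a t| := le_abs_self _
    _ ≤ 1 * |t| := this
    _ = t := by rw [one_mul, abs_of_nonneg h]
    _ ≤ max 0 t := le_max_right _ _
  · rw [prim_nonpos ha h.le]; exact le_max_left _ _

lemma setIntegral_trunc {a : ℝ → ℝ} (ha : Measurable a) {u v : ℝ} (huv : u ≤ v) :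
    ∫ s in Set.Ioc u v, trunc a s = prim a v - prim a u := by
  rw [prim_sub ha, intervalIntegral.integral_of_le huv]


lemma integrable_bdd_mul {c g : ℝ → ℝ} (hc : Measurable c)
    (hcb : ∀ t, c t ∈ Set.Icc (0:ℝ) 1) (hg : Integrable g) :
    Integrable (fun t => c t * g t) := by
  refine hg.bdd_mul (c := 1) hc.aestronglyMeasurable (Filter.Eventually.of_forall fun t => ?_)
  have h := hcb t
  rw [Real.norm_eq_abs, abs_of_nonneg h.1]
  exact h.2

lemma abs_integral_mul_sub_le {c : ℝ → ℝ} (hc : Measurable c)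
    (hcb : ∀ t, c t ∈ Set.Icc (0:ℝ) 1)
    {g h : ℝ → ℝ} (hg : Integrable g) (hh : Integrable h) :
    |(∫ t, c t * g t) - ∫ t, c t * h t| ≤ ∫ t, |g t - h t| := by
  have hcg := integrable_bdd_mul hc hcb hg
  have hch := integrable_bdd_mul hc hcb hh
  rw [← MeasureTheory.integral_sub hcg hch]
  have heq : (fun t => c t * g t - c t * h t) = fun t => c t * (g t - h t) := by
    funext t; ring
  rw [heq]
  have h1 : |∫ t, c t * (g t - h t)| ≤ ∫ t, |c t * (g t - h t)| := by
    simpa only [Real.norm_eq_abs] using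
      MeasureTheory.norm_integral_le_integral_norm (μ := volume) (fun t => c t * (g t - h t))
  refine h1.trans (MeasureTheory.integral_mono ?_ ?_ ?_)
  · exact (integrable_bdd_mul hc hcb (hg.sub hh)).abs
  · exact (hg.sub hh).abs
  · intro t
    have hb := hcb t
    show |c t * (g t - h t)| ≤ |g t - h t|
    rw [abs_mul]
    calc |c t| * |g t - h t| ≤ 1 * |g t - h t| := by
          apply mul_le_mul_of_nonneg_right _ (abs_nonneg _)
          rw [abs_of_nonneg hb.1]; exact hb.2
    _ = |g t - h t| := one_mul _

lemma tendsto_of_approx {T : ℕ → ℝ} {L : ℝ}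
    (h : ∀ ε : ℝ, 0 < ε → ∃ (T' : ℕ → ℝ) (L' : ℝ),
      Filter.Tendsto T' Filter.atTop (nhds L') ∧ (∀ n, |T n - T' n| ≤ ε) ∧ |L - L'| ≤ ε) :
    Filter.Tendsto T Filter.atTop (nhds L) := by
  rw [Metric.tendsto_atTop]
  intro ε hε
  obtain ⟨T', L', hT', hTn, hL⟩ := h (ε/4) (by linarith)
  rw [Metric.tendsto_atTop] at hT'
  obtain ⟨Nn, hNn⟩ := hT' (ε/4) (by linarith)
  refine ⟨Nn, fun n hn => ?_⟩
  have h2 := hNn n hn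
  rw [Real.dist_eq] at h2 ⊢
  have h1 := hTn n
  have key : T n - L = (T n - T' n) + (T' n - L') + (L' - L) := by ring
  rw [key]
  have ha1 := abs_add_le ((T n - T' n) + (T' n - L')) (L' - L)
  have ha2 := abs_add_le (T n - T' n) (T' n - L')
  have ha3 : |L' - L| = |L - L'| := abs_sub_comm _ _
  linarith

section WeakConv

variable {c : ℕ → ℝ → ℝ} {b : ℝ → ℝ}

lemma tendsto_integral_mul_of_prim
    (hc : ∀ n, Measurable (c n)) (hb : Measurable b)
    (hcb : ∀ n t, c n t ∈ Set.Icc (0:ℝ) 1) (hbb : ∀ t, b t ∈ Set.Icc (0:ℝ) 1)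
    (hIoc : ∀ u v : ℝ, u ≤ v →
      Filter.Tendsto (fun n => ∫ t in Set.Ioc u v, c n t) Filter.atTop
        (nhds (∫ t in Set.Ioc u v, b t)))
    (g : ℝ → ℝ) (hg : Integrable g) :
    Filter.Tendsto (fun n => ∫ t, c n t * g t) Filter.atTop (nhds (∫ t, b t * g t)) := by
  -- integral against an indicator of an interval
  have hind : ∀ (d : ℝ → ℝ), Measurable d → (∀ t, d t ∈ Set.Icc (0:ℝ) 1) →
      ∀ (u v e : ℝ), (∫ t, d t * (Set.Ioc u v).indicator (fun _ => e) t)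
        = e * ∫ t in Set.Ioc u v, d t := by
    intro d hd hdb u v e
    have heq : (fun t => d t * (Set.Ioc u v).indicator (fun _ => e) t)
        = (Set.Ioc u v).indicator (fun t => e * d t) := by
      funext t
      by_cases ht : t ∈ Set.Ioc u v
      · simp [Set.indicator_of_mem ht, mul_comm]
      · simp [Set.indicator_of_notMem ht]
    rw [heq, MeasureTheory.integral_indicator measurableSet_Ioc,
      MeasureTheory.integral_const_mul]
  have hindint : ∀ (u v e : ℝ), Integrable ((Set.Ioc u v).indicator (fun _ => e)) := by
    intro u v e
    rw [MeasureTheory.integrable_indicator_iff measurableSet_Ioc]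
    exact MeasureTheory.integrableOn_const measure_Ioc_lt_top.ne
  -- step functions
  have hstep : ∀ (K : ℕ) (p : ℕ → ℝ) (e : ℕ → ℝ), (∀ k, p k ≤ p (k+1)) →
      Filter.Tendsto
        (fun n => ∫ t, c n t * (∑ k ∈ Finset.range K,
          (Set.Ioc (p k) (p (k+1))).indicator (fun _ => e k) t))
        Filter.atTop
        (nhds (∫ t, b t * (∑ k ∈ Finset.range K,
          (Set.Ioc (p k) (p (k+1))).indicator (fun _ => e k) t))) := by
    intro K p e hp
    have hsplit : ∀ (d : ℝ → ℝ), Measurable d → (∀ t, d t ∈ Set.Icc (0:ℝ) 1) →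
        (∫ t, d t * (∑ k ∈ Finset.range K,
            (Set.Ioc (p k) (p (k+1))).indicator (fun _ => e k) t))
        = ∑ k ∈ Finset.range K, e k * ∫ t in Set.Ioc (p k) (p (k+1)), d t := by
      intro d hd hdb
      have heq : (fun t => d t * (∑ k ∈ Finset.range K,
            (Set.Ioc (p k) (p (k+1))).indicator (fun _ => e k) t))
          = fun t => ∑ k ∈ Finset.range K,
              d t * (Set.Ioc (p k) (p (k+1))).indicator (fun _ => e k) t := by
        funext t; rw [Finset.mul_sum]
      rw [heq, MeasureTheory.integral_finset_sum]
      · exact Finset.sum_congr rfl fun k _ => hind d hd hdb _ _ _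
      · intro k _
        exact integrable_bdd_mul hd hdb (hindint _ _ _)
    rw [hsplit b hb hbb]
    have := fun n => hsplit (c n) (hc n) (hcb n)
    simp only [this]
    apply tendsto_finset_sum
    intro k _
    exact (hIoc _ _ (hp k)).const_mul (e k)
  -- continuous compactly supported functions
  have hcontcase : ∀ (h : ℝ → ℝ), Continuous h → HasCompactSupport h →
      Filter.Tendsto (fun n => ∫ t, c n t * h t) Filter.atTop (nhds (∫ t, b t * h t)) := by
    intro h hco hsupp
    have hhint : Integrable h := hco.integrable_of_hasCompactSupport hsupp
    apply tendsto_of_approx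
    intro ε hε
    obtain ⟨r, hr⟩ := hsupp.isBounded.subset_closedBall 0
    set M : ℝ := max r 0 + 1 with hMdef
    have hM0 : 0 < M := by positivity
    have hrM : r + 1 ≤ M := by
      have := le_max_left r 0; simp only [hMdef]; linarith
    have hunif := hsupp.uniformContinuous_of_continuous hco
    rw [Metric.uniformContinuous_iff] at hunif
    obtain ⟨δ, hδ0, hδ⟩ := hunif (ε / (2*M)) (by positivity)
    obtain ⟨K, hK⟩ := exists_nat_gt (2*M/δ)
    have hK0 : 0 < (K:ℝ) := lt_of_le_of_lt (by positivity) hK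
    set Δ : ℝ := 2*M/K with hΔdef
    have hΔ0 : 0 < Δ := by positivity
    have hΔδ : Δ < δ := by
      rw [hΔdef, div_lt_iff₀ hK0]
      rw [div_lt_iff₀ hδ0] at hK
      linarith [mul_comm δ (K:ℝ)]
    set p : ℕ → ℝ := fun k => -M + k * Δ with hpdef
    have hpmono : ∀ {j j' : ℕ}, j ≤ j' → p j ≤ p j' := by
      intro j j' hj
      simp only [hpdef]
      have : (j:ℝ) ≤ (j':ℝ) := by exact_mod_cast hj
      nlinarith
    have hpsucc : ∀ k, p k ≤ p (k+1) := fun k => hpmono (Nat.le_succ k)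
    have hpdiff : ∀ k : ℕ, p (k+1) - p k = Δ := by
      intro k; simp only [hpdef]; push_cast; ring
    have hp0 : p 0 = -M := by simp [hpdef]
    have hpK : p K = M := by
      simp only [hpdef, hΔdef]
      field_simp
      ring
    set e : ℕ → ℝ := fun k => h (p k) with hedef
    set step : ℝ → ℝ := fun t => ∑ k ∈ Finset.range K,
      (Set.Ioc (p k) (p (k+1))).indicator (fun _ => e k) t with hstepdef
    have hstepint : Integrable step :=
      MeasureTheory.integrable_finset_sum _ (fun k _ => hindint _ _ _)
    have hpoint : ∀ t, |h t - step t| ≤ (Set.Ioc (-M) M).indicator (fun _ => ε/(2*M)) t := by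
      intro t
      by_cases ht : t ∈ Set.Ioc (-M) M
      · rw [Set.indicator_of_mem ht]
        obtain ⟨htl, htr⟩ := ht
        set m : ℕ := ⌈(t + M)/Δ⌉₊ with hmdef
        have hposq : 0 < (t + M)/Δ := div_pos (by linarith) hΔ0
        have hm0 : 0 < m := Nat.ceil_pos.mpr hposq
        set k : ℕ := m - 1 with hkdef
        have hkm : k + 1 = m := Nat.succ_pred_eq_of_pos hm0
        have hkmr : ((k:ℝ)) + 1 = (m:ℝ) := by exact_mod_cast congrArg (Nat.cast (R := ℝ)) hkm
        have hup : (t + M)/Δ ≤ (m:ℝ) := Nat.le_ceil _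
        have hlow : (m : ℝ) - 1 < (t + M)/Δ := by
          have h1 := Nat.ceil_lt_add_one (le_of_lt hposq)
          rw [← hmdef] at h1
          linarith
        have hmem : t ∈ Set.Ioc (p k) (p (k+1)) := by
          constructor
          · have h2 : ((k:ℝ)) < (t + M)/Δ := by linarith
            have h3 : ((k:ℝ)) * Δ < t + M := (lt_div_iff₀ hΔ0).mp h2
            simp only [hpdef]; linarith
          · have h3 : t + M ≤ (m:ℝ) * Δ := (div_le_iff₀ hΔ0).mp hup
            simp only [hpdef]
            rw [show ((k:ℕ) + 1 : ℕ) = m from hkm]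
            linarith
        have hkK : k < K := by
          have h2 : (t + M)/Δ ≤ (K:ℝ) := by
            have h3 : t + M ≤ 2*M := by linarith
            calc (t + M)/Δ ≤ (2*M)/Δ := by
                  apply div_le_div_of_nonneg_right h3 hΔ0.le
            _ = (K:ℝ) := by rw [hΔdef]; field_simp
          have hmK : m ≤ K := Nat.ceil_le.mpr h2
          omega
        have hstept : step t = e k := by
          simp only [hstepdef]
          rw [Finset.sum_eq_single_of_mem k (Finset.mem_range.mpr hkK)]
          · rw [Set.indicator_of_mem hmem]
          · intro j _ hne
            rw [Set.indicator_of_notMem]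
            intro hmem'
            rcases lt_or_gt_of_ne hne with hlt | hgt
            · have hle := hpmono (Nat.succ_le_of_lt hlt)
              have := hmem'.2
              have := hmem.1
              linarith
            · have hle := hpmono (Nat.succ_le_of_lt hgt)
              have := hmem'.1
              have := hmem.2
              linarith
        rw [hstept]
        have hd : dist t (p k) < δ := by
          rw [Real.dist_eq, abs_of_pos (sub_pos.mpr hmem.1)]
          have h4 := hmem.2
          have h5 := hpdiff k
          linarith
        have h6 := hδ hd
        rw [Real.dist_eq] at h6
        exact h6.le
      · rw [Set.indicator_of_notMem ht]
        have hstep0 : step t = 0 := by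
          simp only [hstepdef]
          apply Finset.sum_eq_zero
          intro j hj
          apply Set.indicator_of_notMem
          intro hmem'
          apply ht
          constructor
          · have h7 : p 0 ≤ p j := hpmono (Nat.zero_le j)
            rw [hp0] at h7
            linarith [hmem'.1]
          · have hj' : j + 1 ≤ K := Finset.mem_range.mp hj
            have h8 := hpmono hj'
            rw [hpK] at h8
            linarith [hmem'.2]
        have hht : h t = 0 := by
          apply image_eq_zero_of_notMem_tsupport
          intro hts
          have h9 := hr hts
          rw [Metric.mem_closedBall, Real.dist_eq, sub_zero] at h9
          rcases abs_le.mp h9 with ⟨h10, h11⟩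
          exact ht ⟨by linarith, by linarith⟩
        rw [hht, hstep0, sub_zero, abs_zero]
    have hL1 : ∫ t, |h t - step t| ≤ ε := by
      have hmono := MeasureTheory.integral_mono
        ((hhint.sub hstepint).abs) (hindint (-M) M (ε/(2*M))) hpoint
      simp only [Pi.sub_apply] at hmono
      have hval : ∫ t, (Set.Ioc (-M) M).indicator (fun _ => ε/(2*M)) t = ε := by
        rw [MeasureTheory.integral_indicator_const _ measurableSet_Ioc]
        rw [Measure.real, Real.volume_Ioc]
        rw [ENNReal.toReal_ofReal (by linarith)]
        rw [smul_eq_mul]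
        field_simp
        ring
      linarith
    refine ⟨fun n => ∫ t, c n t * step t, ∫ t, b t * step t,
      hstep K p e hpsucc, fun n => ?_, ?_⟩
    · exact (abs_integral_mul_sub_le (hc n) (hcb n) hhint hstepint).trans hL1
    · exact (abs_integral_mul_sub_le hb hbb hhint hstepint).trans hL1
  -- general integrable g
  apply tendsto_of_approx
  intro ε hε
  obtain ⟨h, hsupp, hL1, hcnt, _⟩ := hg.exists_hasCompactSupport_integral_sub_le hε
  simp only [Real.norm_eq_abs] at hL1
  refine ⟨fun n => ∫ t, c n t * h t, ∫ t, b t * h t, hcontcase h hcnt hsupp, fun n => ?_, ?_⟩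
  · have hhint : Integrable h := hcnt.integrable_of_hasCompactSupport hsupp
    exact (abs_integral_mul_sub_le (hc n) (hcb n) hg hhint).trans hL1
  · have hhint : Integrable h := hcnt.integrable_of_hasCompactSupport hsupp
    exact (abs_integral_mul_sub_le hb hbb hg hhint).trans hL1

end WeakConv

end CPaux

namespace CPaux2

open Filter Set

lemma mVar_nonneg {N d : ℕ} (x : Fin N → EuclideanSpace ℝ (Fin d)) : 0 ≤ mVar x := by
  unfold mVar
  apply mul_nonneg (by positivity)
  exact Finset.sum_nonneg fun i _ => by positivity

lemma quad_nonneg {N d : ℕ} (A : Fin N → Fin N → ℝ) (hA : ∀ i j, 0 ≤ A i j)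
    (x : Fin N → EuclideanSpace ℝ (Fin d)) :
    0 ≤ (2 * (N : ℝ) ^ 2)⁻¹ * ∑ i : Fin N, ∑ j : Fin N, A i j * ‖x i - x j‖ ^ 2 := by
  apply mul_nonneg (by positivity)
  apply Finset.sum_nonneg fun i _ => Finset.sum_nonneg fun j _ => ?_
  exact mul_nonneg (hA i j) (by positivity)

lemma lambda2_eq_zero_of_one {d N : ℕ} (hN : N = 1) (A : Fin N → Fin N → ℝ) :
    lambda2 d A = 0 := by
  subst hN
  unfold lambda2
  have hset : {lam : ℝ | ∀ x : Fin 1 → EuclideanSpace ℝ (Fin d),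
      lam * mVar x ≤ (2 * (1 : ℝ) ^ 2)⁻¹ * ∑ i : Fin 1, ∑ j : Fin 1, A i j * ‖x i - x j‖ ^ 2}
      = Set.univ := by
    ext lam
    simp only [Set.mem_setOf_eq, Set.mem_univ, iff_true]
    intro x
    have h1 : mVar x = 0 := by
      unfold mVar
      rw [Fin.sum_univ_one, Fin.sum_univ_one]
      norm_num
    have h2 : ∑ i : Fin 1, ∑ j : Fin 1, A i j * ‖x i - x j‖ ^ 2 = 0 := by
      rw [Fin.sum_univ_one, Fin.sum_univ_one]
      simp
    rw [h1, h2]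
    simp
  rw [show ((1:ℕ):ℝ) = (1:ℝ) by norm_num] at *
  rw [hset]
  exact Real.sSup_univ

lemma lambda2_closed {N d : ℕ} (h2 : 2 ≤ N) (hd : 1 ≤ d) {μ : ℝ} (hμ : 0 < μ)
    (M : ℕ → Fin N → Fin N → ℝ) (Mlim : Fin N → Fin N → ℝ)
    (hnn : ∀ n i j, 0 ≤ M n i j)
    (hten : ∀ i j, Filter.Tendsto (fun n => M n i j) Filter.atTop (nhds (Mlim i j)))
    (hlam : ∀ n, μ ≤ lambda2 d (M n)) : μ ≤ lambda2 d Mlim := by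
  classical
  -- every lam < μ satisfies the quadratic inequality for each M n
  have key : ∀ lam < μ, ∀ n, ∀ x : Fin N → EuclideanSpace ℝ (Fin d),
      lam * mVar x ≤ (2 * (N : ℝ) ^ 2)⁻¹ * ∑ i : Fin N, ∑ j : Fin N,
        M n i j * ‖x i - x j‖ ^ 2 := by
    intro lam hlamμ n
    by_contra hcon
    push_neg at hcon
    obtain ⟨x, hx⟩ := hcon
    have hQ := quad_nonneg (M n) (hnn n) x
    have hV : 0 < mVar x := by
      rcases lt_or_eq_of_le (mVar_nonneg x) with h | h
      · exact h
      · exfalso; rw [← h, mul_zero] at hx; linarith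
    have hub : lambda2 d (M n) ≤ lam := by
      apply csSup_le
      · exact ⟨0, fun x' => by simpa using quad_nonneg (M n) (hnn n) x'⟩
      · intro lam' hlam'
        have h3 := hlam' x
        have h4 : lam' * mVar x < lam * mVar x := lt_of_le_of_lt h3 hx
        exact le_of_lt ((mul_lt_mul_iff_left₀ hV).mp h4)
    linarith [hlam n]
  -- pass to the limit
  have keylim : ∀ lam < μ, ∀ x : Fin N → EuclideanSpace ℝ (Fin d),
      lam * mVar x ≤ (2 * (N : ℝ) ^ 2)⁻¹ * ∑ i : Fin N, ∑ j : Fin N,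
        Mlim i j * ‖x i - x j‖ ^ 2 := by
    intro lam hlamμ x
    have hT : Filter.Tendsto (fun n => (2 * (N : ℝ) ^ 2)⁻¹ * ∑ i : Fin N, ∑ j : Fin N,
        M n i j * ‖x i - x j‖ ^ 2) Filter.atTop
        (nhds ((2 * (N : ℝ) ^ 2)⁻¹ * ∑ i : Fin N, ∑ j : Fin N,
          Mlim i j * ‖x i - x j‖ ^ 2)) := by
      apply Filter.Tendsto.const_mul
      apply tendsto_finset_sum
      intro i _
      apply tendsto_finset_sum
      intro j _
      exact (hten i j).mul_const _
    exact ge_of_tendsto' hT (fun n => key lam hlamμ n x)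
  -- a configuration with positive variance
  have hNpos : (0:ℝ) < (N:ℝ) := by
    have : 0 < N := by omega
    exact_mod_cast this
  set i0 : Fin N := ⟨0, by omega⟩ with hi0
  set i1 : Fin N := ⟨1, by omega⟩ with hi1
  set j0 : Fin d := ⟨0, by omega⟩ with hj0
  set v : EuclideanSpace ℝ (Fin d) := EuclideanSpace.single j0 (1:ℝ) with hv
  set x0 : Fin N → EuclideanSpace ℝ (Fin d) := fun i => if i = i0 then v else 0 with hx0
  have hsum : ∑ k : Fin N, x0 k = v := by
    simp only [hx0]
    rw [Finset.sum_ite_eq' Finset.univ i0 (fun _ => v)]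
    simp
  have hnv : ‖v‖ = 1 := by
    rw [hv, EuclideanSpace.norm_single]
    norm_num
  have hV0 : 0 < mVar x0 := by
    unfold mVar
    apply mul_pos (by positivity)
    have hterm : ‖x0 i1 - (N : ℝ)⁻¹ • ∑ k : Fin N, x0 k‖ ^ 2 = ((N:ℝ)⁻¹)^2 := by
      have hne : i1 ≠ i0 := by
        simp only [hi1, hi0, ne_eq, Fin.mk.injEq]
        omega
      rw [hsum]
      simp only [hx0, if_neg hne]
      rw [zero_sub, norm_neg, norm_smul]
      rw [Real.norm_eq_abs, abs_of_pos (by positivity), hnv]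
      ring
    have hle : ((N:ℝ)⁻¹)^2 ≤ ∑ i : Fin N, ‖x0 i - (N : ℝ)⁻¹ • ∑ k : Fin N, x0 k‖ ^ 2 := by
      rw [← hterm]
      exact Finset.single_le_sum (f := fun i => ‖x0 i - (N : ℝ)⁻¹ • ∑ k : Fin N, x0 k‖ ^ 2)
        (fun i _ => by positivity) (Finset.mem_univ i1)
    have : 0 < ((N:ℝ)⁻¹)^2 := by positivity
    linarith
  -- conclude
  by_contra hcon
  push_neg at hcon
  set lam : ℝ := (lambda2 d Mlim + μ)/2 with hlam2
  have h5 : lambda2 d Mlim < lam := by rw [hlam2]; linarith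
  have h6 : lam < μ := by rw [hlam2]; linarith
  have hmem : lam ∈ {lam : ℝ | ∀ x : Fin N → EuclideanSpace ℝ (Fin d),
      lam * mVar x ≤ (2 * (N : ℝ) ^ 2)⁻¹ * ∑ i : Fin N, ∑ j : Fin N,
        Mlim i j * ‖x i - x j‖ ^ 2} := keylim lam h6
  have hbdd : BddAbove {lam : ℝ | ∀ x : Fin N → EuclideanSpace ℝ (Fin d),
      lam * mVar x ≤ (2 * (N : ℝ) ^ 2)⁻¹ * ∑ i : Fin N, ∑ j : Fin N,
        Mlim i j * ‖x i - x j‖ ^ 2} := by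
    refine ⟨((2 * (N : ℝ) ^ 2)⁻¹ * ∑ i : Fin N, ∑ j : Fin N,
        Mlim i j * ‖x0 i - x0 j‖ ^ 2) / mVar x0, fun lam' hlam' => ?_⟩
    rw [le_div_iff₀ hV0]
    exact hlam' x0
  have h7 : lam ≤ lambda2 d Mlim := le_csSup hbdd hmem
  linarith


lemma stieltjes_facts {F : ℝ → ℝ} (hmono : Monotone F) (hlip : LipschitzWith 1 F) :
    ∃ r : ℝ → ℝ, Measurable r ∧ (∀ᵐ t ∂(volume : Measure ℝ), HasDerivAt F (r t) t) ∧
      (∀ᵐ t ∂(volume : Measure ℝ), 0 ≤ r t ∧ r t ≤ 1) ∧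
      (∀ u v : ℝ, u ≤ v → ∫ t in Set.Ioc u v, r t = F v - F u) := by
  have hcont : Continuous F := hlip.continuous
  set sF : StieltjesFunction ℝ := ⟨F, hmono, fun x => hcont.continuousWithinAt⟩ with hsF
  have hsub : ∀ u v : ℝ, u ≤ v → F v - F u ≤ v - u := by
    intro u v huv
    have := hlip.dist_le_mul v u
    rw [Real.dist_eq, Real.dist_eq, NNReal.coe_one, one_mul] at this
    have h1 := le_abs_self (F v - F u)
    have h2 := le_abs_self (v - u)
    rw [abs_of_nonneg (by linarith : (0:ℝ) ≤ v - u)] at this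
    linarith
  set G : ℝ → ℝ := fun t => t - F t with hG
  have hGmono : Monotone G := by
    intro u v huv
    have := hsub u v huv
    simp only [hG]
    linarith
  have hGcont : Continuous G := continuous_id.sub hcont
  set sG : StieltjesFunction ℝ := ⟨G, hGmono, fun x => hGcont.continuousWithinAt⟩ with hsG
  have hvol : sF.measure + sG.measure = volume := by
    have hfin : ∀ (sfn : StieltjesFunction ℝ) (x : ℝ),
        sfn.measure (Set.Ioo (x-1) (x+1)) < ⊤ := by
      intro sfn x
      refine lt_of_le_of_lt (measure_mono Set.Ioo_subset_Ioc_self) ?_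
      rw [StieltjesFunction.measure_Ioc]
      exact ENNReal.ofReal_lt_top
    have hinst : IsLocallyFiniteMeasure (sF.measure + sG.measure) := by
      refine ⟨fun x => ⟨Set.Ioo (x-1) (x+1), Ioo_mem_nhds (by linarith) (by linarith), ?_⟩⟩
      rw [MeasureTheory.Measure.add_apply]
      exact ENNReal.add_lt_top.mpr ⟨hfin sF x, hfin sG x⟩
    refine MeasureTheory.Measure.ext_of_Ioc _ _ (fun a b hab => ?_)
    rw [MeasureTheory.Measure.add_apply, StieltjesFunction.measure_Ioc,
      StieltjesFunction.measure_Ioc, Real.volume_Ioc]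
    have hFab : (0:ℝ) ≤ F b - F a := sub_nonneg.mpr (hmono hab.le)
    have hGab : (0:ℝ) ≤ G b - G a := sub_nonneg.mpr (hGmono hab.le)
    rw [← ENNReal.ofReal_add hFab hGab]
    congr 1
    show F b - F a + (G b - G a) = b - a
    simp only [hG]
    ring
  have hle : sF.measure ≤ volume := by
    rw [← hvol]
    exact MeasureTheory.Measure.le_add_right le_rfl
  have hac : sF.measure ≪ volume := hle.absolutelyContinuous
  set r : ℝ → ℝ := fun t => (sF.measure.rnDeriv volume t).toReal with hr
  have hrmeas : Measurable r :=
    (MeasureTheory.Measure.measurable_rnDeriv _ _).ennreal_toReal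
  have hderiv : ∀ᵐ t ∂(volume : Measure ℝ), HasDerivAt F (r t) t := by
    have := sF.ae_hasDerivAt
    filter_upwards [this] with t ht
    exact ht
  have hbounds : ∀ᵐ t ∂(volume : Measure ℝ), 0 ≤ r t ∧ r t ≤ 1 := by
    filter_upwards [hderiv] with t ht
    refine ⟨ENNReal.toReal_nonneg, ?_⟩
    have h1 := ht.le_of_lipschitz hlip
    rw [Real.norm_eq_abs, NNReal.coe_one] at h1
    exact (abs_le.mp h1).2
  refine ⟨r, hrmeas, hderiv, hbounds, fun u v huv => ?_⟩
  have h2 : ∫ t in Set.Ioc u v, r t =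
      (∫⁻ t in Set.Ioc u v, sF.measure.rnDeriv volume t).toReal := by
    rw [MeasureTheory.integral_toReal]
    · exact (MeasureTheory.Measure.measurable_rnDeriv _ _).aemeasurable
    · exact MeasureTheory.ae_restrict_of_ae
        (MeasureTheory.Measure.rnDeriv_lt_top sF.measure volume)
  rw [h2, MeasureTheory.Measure.setLIntegral_rnDeriv hac, StieltjesFunction.measure_Ioc,
    ENNReal.toReal_ofReal (sub_nonneg.mpr (hmono huv))]

end CPaux2

open Filter in
/-- sequential weak-* compactness of the set of connectivity-persistent
balanced signals: any sequence admits a subsequence converging, tested against every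
`L¹` function on `[0,∞)` entrywise, to a connectivity-persistent signal. -/
theorem connectivityPersistent_weakStar_seq_compact {N d : ℕ} (hN : 1 ≤ N) (hd : 1 ≤ d)
    (τ μ : ℝ) (hτ : 0 < τ) (hμ : μ ∈ Set.Ioc (0 : ℝ) 1)
    (A : ℕ → Fin N → Fin N → ℝ → ℝ)
    (hA : ∀ n, ConnectivityPersistent N d τ μ (A n)) :
    ∃ ψ : ℕ → ℕ, StrictMono ψ ∧
      ∃ B : Fin N → Fin N → ℝ → ℝ, ConnectivityPersistent N d τ μ B ∧
        ∀ i j : Fin N, ∀ f : ℝ → ℝ, IntegrableOn f (Set.Ici (0 : ℝ)) →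
          Filter.Tendsto (fun n => ∫ t in Set.Ici (0 : ℝ), A (ψ n) i j t * f t)
            Filter.atTop (nhds (∫ t in Set.Ici (0 : ℝ), B i j t * f t)) := by
  classical
  rcases Nat.lt_or_ge N 2 with hN2 | hN2
  · exfalso
    have hN1 : N = 1 := by omega
    have h := (hA 0).2.2 0 le_rfl
    rw [CPaux2.lambda2_eq_zero_of_one hN1] at h
    exact absurd h (not_le.mpr hμ.1)
  have hmeas : ∀ n (i j : Fin N), Measurable (A n i j) := fun n i j => ((hA n).1 i j).1
  have hval : ∀ n (i j : Fin N), ∀ t : ℝ, 0 ≤ t → A n i j t ∈ Set.Icc (0:ℝ) 1 :=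
    fun n i j => ((hA n).1 i j).2
  set c : ℕ → Fin N → Fin N → ℝ → ℝ := fun n i j => CPaux.trunc (A n i j) with hcdef
  set Fn : ℕ → Fin N → Fin N → ℝ → ℝ := fun n i j => CPaux.prim (A n i j) with hFndef
  -- extraction on rationals
  set s : Set (((Fin N × Fin N) × ℚ) → ℝ) :=
    Set.univ.pi (fun p => Set.Icc 0 (max 0 (p.2:ℝ))) with hsdef
  have hscomp : IsCompact s := isCompact_univ_pi (fun p => isCompact_Icc)
  set u : ℕ → ((Fin N × Fin N) × ℚ) → ℝ := fun n p => Fn n p.1.1 p.1.2 (p.2:ℝ) with hudef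
  have humem : ∀ n, u n ∈ s := by
    intro n
    rw [hsdef, Set.mem_univ_pi]
    intro p
    exact ⟨CPaux.prim_nonneg (hmeas n _ _) _, CPaux.prim_le (hmeas n _ _) _⟩
  obtain ⟨L, _, ψ, hψ, hconv⟩ := hscomp.tendsto_subseq humem
  have hconv' : ∀ (i j : Fin N) (q : ℚ),
      Tendsto (fun n => Fn (ψ n) i j (q:ℝ)) atTop (nhds (L ((i,j),q))) := by
    intro i j q
    exact (tendsto_pi_nhds.mp hconv) ((i,j),q)
  have hlipn : ∀ n (i j : Fin N), LipschitzWith 1 (Fn n i j) :=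
    fun n i j => CPaux.prim_lipschitz (hmeas n i j)
  -- limits at all reals
  have hcauchy : ∀ (i j : Fin N) (t : ℝ), ∃ l : ℝ,
      Tendsto (fun n => Fn (ψ n) i j t) atTop (nhds l) := by
    intro i j t
    apply cauchySeq_tendsto_of_complete
    rw [Metric.cauchySeq_iff]
    intro ε hε
    obtain ⟨q, hq1, hq2⟩ := exists_rat_btwn (show t - ε/4 < t by linarith)
    have hq : dist t (q:ℝ) < ε/4 := by
      rw [Real.dist_eq, abs_sub_lt_iff]
      constructor <;> linarith
    have hcq := (hconv' i j q).cauchySeq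
    rw [Metric.cauchySeq_iff] at hcq
    obtain ⟨B0, hB0⟩ := hcq (ε/4) (by linarith)
    refine ⟨B0, fun m hm n hn => ?_⟩
    have h1 := (hlipn (ψ m) i j).dist_le_mul t (q:ℝ)
    have h2 := (hlipn (ψ n) i j).dist_le_mul (q:ℝ) t
    rw [NNReal.coe_one, one_mul] at h1 h2
    have h3 := hB0 m hm n hn
    have h4 : dist ((q:ℝ)) t < ε/4 := by rwa [dist_comm]
    calc dist (Fn (ψ m) i j t) (Fn (ψ n) i j t)
        ≤ dist (Fn (ψ m) i j t) (Fn (ψ m) i j (q:ℝ))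
          + dist (Fn (ψ m) i j (q:ℝ)) (Fn (ψ n) i j (q:ℝ))
          + dist (Fn (ψ n) i j (q:ℝ)) (Fn (ψ n) i j t) := dist_triangle4 _ _ _ _
    _ < ε := by
        have h5 : dist (Fn (ψ m) i j t) (Fn (ψ m) i j (q:ℝ)) < ε/4 := lt_of_le_of_lt h1 hq
        have h6 : dist (Fn (ψ n) i j (q:ℝ)) (Fn (ψ n) i j t) < ε/4 := lt_of_le_of_lt h2 h4
        linarith
  choose Flim hFlim using hcauchy
  -- properties of the limit primitives
  have hFmono : ∀ (i j : Fin N), Monotone (Flim i j) := by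
    intro i j a b hab
    exact le_of_tendsto_of_tendsto' (hFlim i j a) (hFlim i j b)
      (fun n => CPaux.prim_mono (hmeas _ _ _) hab)
  have hFlip : ∀ (i j : Fin N), LipschitzWith 1 (Flim i j) := by
    intro i j
    apply LipschitzWith.of_dist_le_mul
    intro x y
    have h1 : Tendsto (fun n => dist (Fn (ψ n) i j x) (Fn (ψ n) i j y)) atTop
        (nhds (dist (Flim i j x) (Flim i j y))) := (hFlim i j x).dist (hFlim i j y)
    exact le_of_tendsto h1 (Eventually.of_forall fun n => (hlipn _ i j).dist_le_mul x y)
  -- derivative representation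
  choose r hrmeas hrderiv hrbound hrint using
    fun (i j : Fin N) => CPaux2.stieltjes_facts (hFmono i j) (hFlip i j)
  set B : Fin N → Fin N → ℝ → ℝ := fun i j t => CPaux.clamp (r i j t) with hBdef
  have hBr : ∀ (i j : Fin N), ∀ᵐ t ∂(volume : Measure ℝ), B i j t = r i j t := by
    intro i j
    filter_upwards [hrbound i j] with t ht
    exact CPaux.clamp_of_mem ⟨ht.1, ht.2⟩
  have hBmeas : ∀ (i j : Fin N), Measurable (B i j) :=
    fun i j => CPaux.measurable_clamp.comp (hrmeas i j)
  have hBmem : ∀ (i j : Fin N) (t : ℝ), B i j t ∈ Set.Icc (0:ℝ) 1 :=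
    fun i j t => CPaux.clamp_mem _
  have hBIoc : ∀ (i j : Fin N) (a b : ℝ), a ≤ b →
      ∫ t in Set.Ioc a b, B i j t = Flim i j b - Flim i j a := by
    intro i j a b hab
    rw [← hrint i j a b hab]
    exact MeasureTheory.integral_congr_ae (MeasureTheory.ae_restrict_of_ae (hBr i j))
  have hcIoc : ∀ (i j : Fin N) (a b : ℝ), a ≤ b →
      Tendsto (fun n => ∫ t in Set.Ioc a b, c (ψ n) i j t) atTop
        (nhds (∫ t in Set.Ioc a b, B i j t)) := by
    intro i j a b hab
    have heq : ∀ n, ∫ t in Set.Ioc a b, c (ψ n) i j t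
        = Fn (ψ n) i j b - Fn (ψ n) i j a :=
      fun n => CPaux.setIntegral_trunc (hmeas _ _ _) hab
    rw [hBIoc i j a b hab]
    simp only [heq]
    exact (hFlim i j b).sub (hFlim i j a)
  have hmain : ∀ (i j : Fin N) (g : ℝ → ℝ), Integrable g →
      Tendsto (fun n => ∫ t, c (ψ n) i j t * g t) atTop
        (nhds (∫ t, B i j t * g t)) := by
    intro i j g hg
    exact CPaux.tendsto_integral_mul_of_prim
      (fun n => CPaux.trunc_measurable (hmeas _ _ _)) (hBmeas i j)
      (fun n t => CPaux.trunc_mem _ _) (fun t => hBmem i j t) (hcIoc i j) g hg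
  refine ⟨ψ, hψ, B, ⟨fun i j => ⟨hBmeas i j, fun t _ => hBmem i j t⟩, ?_, ?_⟩, ?_⟩
  · -- balanced a.e.
    have hsumFn : ∀ n (i : Fin N) (t : ℝ), 0 ≤ t →
        ∑ j : Fin N, Fn n i j t = ∑ j : Fin N, Fn n j i t := by
      intro n i t ht
      show ∑ j : Fin N, CPaux.prim (A n i j) t = ∑ j : Fin N, CPaux.prim (A n j i) t
      unfold CPaux.prim
      rw [← intervalIntegral.integral_finset_sum (fun j _ =>
        CPaux.trunc_intervalIntegrable (hmeas n i j) 0 t),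
        ← intervalIntegral.integral_finset_sum (fun j _ =>
        CPaux.trunc_intervalIntegrable (hmeas n j i) 0 t)]
      apply intervalIntegral.integral_congr_ae
      filter_upwards [(hA n).2.1] with x hbal hx
      have hx0 : (0:ℝ) ≤ x := by
        rcases Set.mem_uIoc.mp hx with h | h
        · exact h.1.le
        · linarith [h.1, h.2]
      rw [Finset.sum_congr rfl (fun j _ => CPaux.trunc_eq (hval n i j) hx0),
        Finset.sum_congr rfl (fun j _ => CPaux.trunc_eq (hval n j i) hx0)]
      exact hbal hx0 i
    have hsumF : ∀ (i : Fin N) (t : ℝ), 0 ≤ t →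
        ∑ j : Fin N, Flim i j t = ∑ j : Fin N, Flim j i t := by
      intro i t ht
      have h1 : Tendsto (fun n => ∑ j : Fin N, Fn (ψ n) i j t) atTop
          (nhds (∑ j : Fin N, Flim i j t)) :=
        tendsto_finset_sum _ (fun j _ => hFlim i j t)
      have h2 : Tendsto (fun n => ∑ j : Fin N, Fn (ψ n) j i t) atTop
          (nhds (∑ j : Fin N, Flim j i t)) :=
        tendsto_finset_sum _ (fun j _ => hFlim j i t)
      exact tendsto_nhds_unique (h1.congr (fun n => hsumFn (ψ n) i t ht)) h2
    have hDall : ∀ᵐ t ∂(volume : Measure ℝ), ∀ (i j : Fin N),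
        HasDerivAt (Flim i j) (r i j t) t := by
      rw [MeasureTheory.ae_all_iff]
      intro i
      rw [MeasureTheory.ae_all_iff]
      intro j
      exact hrderiv i j
    have hBall : ∀ᵐ t ∂(volume : Measure ℝ), ∀ (i j : Fin N), B i j t = r i j t := by
      rw [MeasureTheory.ae_all_iff]
      intro i
      rw [MeasureTheory.ae_all_iff]
      intro j
      exact hBr i j
    have hne0 : ∀ᵐ t ∂(volume : Measure ℝ), t ≠ (0:ℝ) := by
      refine MeasureTheory.ae_iff.mpr ?_
      simpa using Real.volume_singleton (a := (0:ℝ))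
    filter_upwards [hDall, hBall, hne0] with t hdt hbt htne hge
    intro i
    have htpos : 0 < t := lt_of_le_of_ne hge (Ne.symm htne)
    have h1 : HasDerivAt (fun x => ∑ j : Fin N, Flim i j x)
        (∑ j : Fin N, r i j t) t := HasDerivAt.fun_sum (fun j _ => hdt i j)
    have h2 : HasDerivAt (fun x => ∑ j : Fin N, Flim j i x)
        (∑ j : Fin N, r j i t) t := HasDerivAt.fun_sum (fun j _ => hdt j i)
    have heq : (fun x => ∑ j : Fin N, Flim j i x) =ᶠ[nhds t]
        (fun x => ∑ j : Fin N, Flim i j x) := by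
      filter_upwards [IsOpen.mem_nhds isOpen_Ioi htpos] with x hx
      exact (hsumF i x (le_of_lt hx)).symm
    have h3 : HasDerivAt (fun x => ∑ j : Fin N, Flim j i x)
        (∑ j : Fin N, r i j t) t := h1.congr_of_eventuallyEq heq
    have h4 : (∑ j : Fin N, r i j t) = ∑ j : Fin N, r j i t := h3.unique h2
    show ∑ j : Fin N, B i j t = ∑ j : Fin N, B j i t
    rw [Finset.sum_congr rfl (fun j _ => hbt i j),
      Finset.sum_congr rfl (fun j _ => hbt j i)]
    exact h4
  · -- lambda2 persistence
    intro t ht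
    set Mn : ℕ → Fin N → Fin N → ℝ :=
      fun n i j => τ⁻¹ * ∫ x in t..t+τ, A (ψ n) i j x with hMndef
    have hMeq : ∀ n (i j : Fin N),
        Mn n i j = τ⁻¹ * (Fn (ψ n) i j (t+τ) - Fn (ψ n) i j t) := by
      intro n i j
      show τ⁻¹ * _ = _
      congr 1
      rw [CPaux.prim_sub (hmeas _ _ _) t (t+τ)]
      apply intervalIntegral.integral_congr
      intro x hx
      rw [Set.uIcc_of_le (by linarith : t ≤ t + τ)] at hx
      exact (CPaux.trunc_eq (hval _ i j) (le_trans ht hx.1)).symm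
    have hMlim : ∀ (i j : Fin N), Tendsto (fun n => Mn n i j) atTop
        (nhds (τ⁻¹ * ∫ x in t..t+τ, B i j x)) := by
      intro i j
      have hBiv : ∫ x in t..t+τ, B i j x = Flim i j (t+τ) - Flim i j t := by
        rw [intervalIntegral.integral_of_le (by linarith : t ≤ t + τ),
          hBIoc i j t (t+τ) (by linarith)]
      rw [hBiv]
      simp only [hMeq]
      exact ((hFlim i j (t+τ)).sub (hFlim i j t)).const_mul τ⁻¹
    have hnn : ∀ n (i j : Fin N), 0 ≤ Mn n i j := by
      intro n i j
      rw [hMeq]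
      apply mul_nonneg (inv_nonneg.mpr hτ.le)
      have := CPaux.prim_mono (hmeas (ψ n) i j) (by linarith : t ≤ t+τ)
      show (0:ℝ) ≤ CPaux.prim (A (ψ n) i j) (t+τ) - CPaux.prim (A (ψ n) i j) t
      linarith
    exact CPaux2.lambda2_closed hN2 hd hμ.1 Mn _ hnn hMlim (fun n => (hA (ψ n)).2.2 t ht)
  · -- final weak-* convergence
    intro i j f hf
    have hind : Integrable (Set.indicator (Set.Ici (0:ℝ)) f) := by
      rwa [MeasureTheory.integrable_indicator_iff measurableSet_Ici]
    have h1 := hmain i j _ hind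
    have hsplit : ∀ (dfun : ℝ → ℝ), (∫ t in Set.Ici (0:ℝ), dfun t * f t)
        = ∫ t, dfun t * (Set.indicator (Set.Ici (0:ℝ)) f) t := by
      intro dfun
      rw [← MeasureTheory.integral_indicator measurableSet_Ici]
      congr 1
      funext x
      by_cases hx : x ∈ Set.Ici (0:ℝ)
      · simp [Set.indicator_of_mem hx]
      · simp [Set.indicator_of_notMem hx]
    have hAc : ∀ n, (∫ t in Set.Ici (0:ℝ), A (ψ n) i j t * f t)
        = ∫ t in Set.Ici (0:ℝ), c (ψ n) i j t * f t := by
      intro n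
      apply MeasureTheory.setIntegral_congr_fun measurableSet_Ici
      intro x hx
      show A (ψ n) i j x * f x = CPaux.trunc (A (ψ n) i j) x * f x
      rw [CPaux.trunc_eq (hval _ i j) hx]
    rw [hsplit (B i j)]
    apply h1.congr
    intro n
    rw [← hsplit (c (ψ n) i j), ← hAc n]
end
end
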